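/- arXiv:1502.02137 — 5 statements merged into one kernel-verified Lean document; each statement's English description precedes it below -/
import Mathlib

section
/- Let Q be a quadratic form in m variables over 𝔽_p of rank r. Then ∑_{y ∈ 𝔽_p \ {0}} ∑_{x ∈ 𝔽_p^m} ζ_p^{y·Q(x)} equals ε·(p-1)·p^{m-r/2} for some ε ∈ {1,-1} when r is even, and equals 0 when r is odd. -/
open QuadraticMap AddChar Finset QuadraticForm

/-- `ζ_p^a = exp(2πi·ā/p)` for `a ∈ 𝔽_p`, where `ā ∈ {0,…,p-1}` lifts `a`. -/
noncomputable def zetaC (p : ℕ) (a : ZMod p) : ℂ :=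
  Complex.exp (2 * Real.pi * Complex.I * (a.val : ℂ) / (p : ℂ))

noncomputable def psiC (p : ℕ) [NeZero p] : AddChar (ZMod p) ℂ :=
  AddChar.zmodChar p ((Complex.isPrimitiveRoot_exp p (NeZero.ne p)).pow_eq_one)

lemma psiC_apply (p : ℕ) [NeZero p] (a : ZMod p) : psiC p a = zetaC p a := by
  rw [psiC, AddChar.zmodChar_apply, zetaC, ← Complex.exp_nat_mul]
  ring_nf

lemma psiC_primitive (p : ℕ) [NeZero p] : (psiC p).IsPrimitive :=
  AddChar.zmodChar_primitive_of_primitive_root p (Complex.isPrimitiveRoot_exp p (NeZero.ne p))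

noncomputable def chiC (p : ℕ) [Fact p.Prime] : MulChar (ZMod p) ℂ :=
  (quadraticChar (ZMod p)).ringHomComp (Int.castRingHom ℂ)

lemma chiC_apply (p : ℕ) [Fact p.Prime] (a : ZMod p) :
    chiC p a = ((quadraticChar (ZMod p) a : ℤ) : ℂ) := rfl

lemma chiC_quad (p : ℕ) [Fact p.Prime] : (chiC p).IsQuadratic :=
  (quadraticChar_isQuadratic (ZMod p)).comp _

lemma chiC_ne_one (p : ℕ) [Fact p.Prime] (hp2 : p ≠ 2) : chiC p ≠ 1 :=
  (MulChar.ringHomComp_ne_one_iff (RingHom.injective_int _)).mpr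
    (quadraticChar_ne_one (by rwa [ZMod.ringChar_zmod_n]))

lemma chiC_sq_one {p : ℕ} [Fact p.Prime] {a : ZMod p} (ha : a ≠ 0) :
    chiC p a * chiC p a = 1 := by
  rw [chiC_apply, ← Int.cast_mul, ← pow_two, quadraticChar_sq_one ha, Int.cast_one]

lemma addchar_map_sum {A M ι : Type*} [AddCommMonoid A] [CommMonoid M] (ψ : AddChar A M)
    (s : Finset ι) (f : ι → A) : ψ (∑ i ∈ s, f i) = ∏ i ∈ s, ψ (f i) := by
  induction s using Finset.cons_induction with
  | empty => simp
  | cons a s ha ih => rw [Finset.sum_cons, Finset.prod_cons, AddChar.map_add_eq_mul, ih]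

lemma sum_psi_sq {p : ℕ} [Fact p.Prime] (hp2 : p ≠ 2) {c : ZMod p} (hc : c ≠ 0) :
    ∑ t : ZMod p, psiC p (c * t ^ 2) = chiC p c * gaussSum (chiC p) (psiC p) := by
  have hrc : ringChar (ZMod p) ≠ 2 := by rwa [ZMod.ringChar_zmod_n]
  have key : ∀ a : ZMod p,
      ∑ t ∈ univ.filter (fun t : ZMod p => t ^ 2 = a), psiC p (c * a)
        = ((quadraticChar (ZMod p) a : ℂ) + 1) * psiC p (c * a) := by
    intro a
    rw [Finset.sum_const, ← Set.toFinset_setOf, nsmul_eq_mul]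
    congr 1
    have := quadraticChar_card_sqrts hrc a
    exact_mod_cast congrArg (fun z : ℤ => (z : ℂ)) this
  have h1 : ∑ a : ZMod p, chiC p a * psiC p (c * a)
      = gaussSum (chiC p) (AddChar.mulShift (psiC p) c) := by
    unfold gaussSum; simp
  have h2 : ∑ a : ZMod p, psiC p (c * a) = 0 := by
    have hns : AddChar.mulShift (psiC p) c ≠ 1 := psiC_primitive p hc
    have h0 : (AddChar.mulShift (psiC p) c) ≠ 0 := hns
    have := AddChar.sum_eq_zero_iff_ne_zero.mpr h0
    simpa using this
  calc ∑ t : ZMod p, psiC p (c * t ^ 2)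
      = ∑ a : ZMod p, ∑ t ∈ univ.filter (fun t : ZMod p => t ^ 2 = a), psiC p (c * a) :=
        (Finset.sum_fiberwise' univ (fun t : ZMod p => t ^ 2) (fun a => psiC p (c * a))).symm
    _ = ∑ a : ZMod p, ((quadraticChar (ZMod p) a : ℂ) + 1) * psiC p (c * a) :=
        Finset.sum_congr rfl fun a _ => key a
    _ = (∑ a : ZMod p, chiC p a * psiC p (c * a)) + ∑ a : ZMod p, psiC p (c * a) := by
        rw [← Finset.sum_add_distrib]
        refine Finset.sum_congr rfl fun a _ => ?_
        rw [chiC_apply]; ring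
    _ = gaussSum (chiC p) (AddChar.mulShift (psiC p) c) + 0 := by rw [h1, h2]
    _ = chiC p c * gaussSum (chiC p) (psiC p) := by
        rw [add_zero, ← gaussSum_mulShift (chiC p) (psiC p) (Units.mk0 c hc)]
        rw [show ((Units.mk0 c hc : (ZMod p)ˣ) : ZMod p) = c from rfl, ← mul_assoc,
          chiC_sq_one hc, one_mul]

lemma sum_psi_weighted {p : ℕ} [Fact p.Prime] (hp2 : p ≠ 2) {n : ℕ} (w : Fin n → ZMod p)
    {y : ZMod p} (hy : y ≠ 0) :
    ∑ x : Fin n → ZMod p, psiC p (y * weightedSumSquares (ZMod p) w x)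
      = ∏ i, (if w i = 0 then (p : ℂ)
          else chiC p (y * w i) * gaussSum (chiC p) (psiC p)) := by
  have step : ∀ x : Fin n → ZMod p, psiC p (y * weightedSumSquares (ZMod p) w x)
      = ∏ i, psiC p ((y * w i) * (x i) ^ 2) := by
    intro x
    rw [weightedSumSquares_apply]
    simp only [smul_eq_mul]
    rw [Finset.mul_sum, addchar_map_sum]
    exact Finset.prod_congr rfl fun i _ => by
      rw [show y * (w i * (x i * x i)) = (y * w i) * (x i) ^ 2 by ring]
  rw [Finset.sum_congr rfl fun x _ => step x]
  rw [show (∑ x : Fin n → ZMod p, ∏ i, psiC p ((y * w i) * (x i) ^ 2))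
      = ∏ i, ∑ t : ZMod p, psiC p ((y * w i) * t ^ 2) from
    (Fintype.prod_sum (κ := fun _ : Fin n => ZMod p)
      (fun i t => psiC p ((y * w i) * t ^ 2))).symm]
  refine Finset.prod_congr rfl fun i _ => ?_
  by_cases h : w i = 0
  · rw [if_pos h]
    simp only [h, mul_zero, zero_mul, AddChar.map_zero_eq_one]
    rw [Finset.sum_const, nsmul_eq_mul, mul_one]
    simp [ZMod.card]
  · rw [if_neg h]
    exact sum_psi_sq hp2 (mul_ne_zero hy h)

lemma polar_weighted {p : ℕ} [Fact p.Prime] {n : ℕ} (w : Fin n → ZMod p)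
    (x z : Fin n → ZMod p) :
    polar (weightedSumSquares (ZMod p) w) x z = ∑ i, 2 * w i * x i * z i := by
  simp only [polar, weightedSumSquares_apply, smul_eq_mul, Pi.add_apply]
  rw [← Finset.sum_sub_distrib, ← Finset.sum_sub_distrib]
  exact Finset.sum_congr rfl fun i _ => by ring

lemma mem_ker_weighted {p : ℕ} [Fact p.Prime] {n : ℕ} (hp2 : p ≠ 2) (w : Fin n → ZMod p)
    (x : Fin n → ZMod p) :
    x ∈ LinearMap.ker (polarBilin (weightedSumSquares (ZMod p) w)) ↔ ∀ i, w i * x i = 0 := by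
  have h2 : (2 : ZMod p) ≠ 0 := by
    rw [show (2 : ZMod p) = ((2 : ℕ) : ZMod p) by norm_num, Ne,
      ZMod.natCast_eq_zero_iff]
    intro h
    exact hp2 ((Nat.prime_dvd_prime_iff_eq Fact.out Nat.prime_two).mp h)
  rw [LinearMap.mem_ker, LinearMap.ext_iff]
  constructor
  · intro h i
    have := h (Pi.single i 1)
    rw [polarBilin_apply_apply, polar_weighted, LinearMap.zero_apply] at this
    rw [Finset.sum_eq_single_of_mem i (Finset.mem_univ i)
      (fun j _ hj => by rw [Pi.single_eq_of_ne hj]; ring)] at this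
    rw [Pi.single_eq_same, mul_one] at this
    rcases mul_eq_zero.mp (by rw [← this]; ring : (2 : ZMod p) * (w i * x i) = 0) with h' | h'
    · exact absurd h' h2
    · exact h'
  · intro h z
    rw [polarBilin_apply_apply, polar_weighted, LinearMap.zero_apply]
    refine Finset.sum_eq_zero fun i _ => ?_
    have := h i
    calc 2 * w i * x i * z i = 2 * z i * (w i * x i) := by ring
      _ = 0 := by rw [this, mul_zero]

noncomputable def kerWeightedEquiv {p : ℕ} [Fact p.Prime] {n : ℕ} (hp2 : p ≠ 2)
    (w : Fin n → ZMod p) :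
    LinearMap.ker (polarBilin (weightedSumSquares (ZMod p) w)) ≃ₗ[ZMod p]
      ({i : Fin n // w i = 0} → ZMod p) where
  toFun x i := x.val i.val
  map_add' x y := rfl
  map_smul' c x := rfl
  invFun g := ⟨fun i => if h : w i = 0 then g ⟨i, h⟩ else 0, by
    rw [mem_ker_weighted hp2]
    intro i
    by_cases h : w i = 0
    · simp [h]
    · simp [h]⟩
  left_inv x := by
    ext i
    by_cases h : w i = 0
    · simp [h]
    · have := (mem_ker_weighted hp2 w x.val).mp x.property i
      have hx : x.val i = 0 := by
        rcases mul_eq_zero.mp this with h' | h'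
        · exact absurd h' h
        · exact h'
      simp [h, hx]
  right_inv g := by ext i; simp [i.property]

lemma finrank_ker_weighted {p : ℕ} [Fact p.Prime] {n : ℕ} (hp2 : p ≠ 2)
    (w : Fin n → ZMod p) :
    Module.finrank (ZMod p)
        (LinearMap.ker (polarBilin (weightedSumSquares (ZMod p) w)))
      = (Finset.univ.filter fun i => w i = 0).card := by
  rw [(kerWeightedEquiv hp2 w).finrank_eq, Module.finrank_fintype_fun_eq_card,
    Fintype.card_subtype]

lemma polar_isometry {K M₁ M₂ : Type*} [Field K] [AddCommGroup M₁] [Module K M₁]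
    [AddCommGroup M₂] [Module K M₂] {Q₁ : QuadraticForm K M₁} {Q₂ : QuadraticForm K M₂}
    (e : Q₁.IsometryEquiv Q₂) (x z : M₁) :
    polar Q₁ x z = polar Q₂ (e.toLinearEquiv x) (e.toLinearEquiv z) := by
  have h : ∀ m, Q₂ (e.toLinearEquiv m) = Q₁ m := e.map_app'
  simp only [polar, ← h, map_add]

lemma ker_polarBilin_map {K M₁ M₂ : Type*} [Field K] [AddCommGroup M₁] [Module K M₁]
    [AddCommGroup M₂] [Module K M₂] {Q₁ : QuadraticForm K M₁} {Q₂ : QuadraticForm K M₂}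
    (e : Q₁.IsometryEquiv Q₂) :
    (LinearMap.ker (polarBilin Q₁)).map (e.toLinearEquiv : M₁ →ₗ[K] M₂)
      = LinearMap.ker (polarBilin Q₂) := by
  ext v
  rw [Submodule.mem_map]
  constructor
  · rintro ⟨x, hx, rfl⟩
    rw [LinearMap.mem_ker, LinearMap.ext_iff] at hx ⊢
    intro z
    have hz := hx (e.toLinearEquiv.symm z)
    rw [polarBilin_apply_apply, LinearMap.zero_apply] at hz ⊢
    rw [show (e.toLinearEquiv : M₁ →ₗ[K] M₂) x = e.toLinearEquiv x from rfl]
    rw [polar_isometry e, e.toLinearEquiv.apply_symm_apply] at hz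
    exact hz
  · intro hv
    refine ⟨e.toLinearEquiv.symm v, ?_, by simp⟩
    rw [LinearMap.mem_ker, LinearMap.ext_iff] at hv ⊢
    intro z
    have := hv (e.toLinearEquiv z)
    rw [polarBilin_apply_apply, LinearMap.zero_apply] at this ⊢
    rw [polar_isometry e, e.toLinearEquiv.apply_symm_apply]
    exact this

lemma finrank_ker_polarBilin_eq {K M₁ M₂ : Type*} [Field K] [AddCommGroup M₁] [Module K M₁]
    [AddCommGroup M₂] [Module K M₂] {Q₁ : QuadraticForm K M₁} {Q₂ : QuadraticForm K M₂}
    (e : Q₁.IsometryEquiv Q₂) :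
    Module.finrank K (LinearMap.ker (polarBilin Q₁))
      = Module.finrank K (LinearMap.ker (polarBilin Q₂)) := by
  rw [← ker_polarBilin_map e, LinearEquiv.finrank_map_eq]

/-- Lemma 2.2: For a quadratic form `Q` in `m` variables over `𝔽_p` of rank `r`,
the sum `∑_{y ∈ 𝔽_p*} ∑_{x ∈ 𝔽_p^m} ζ_p^{yQ(x)}` is `±(p-1)p^{m-r/2}` when `r`
is even, and `0` when `r` is odd.  The rank `r` is `m` minus the dimension of
the radical of the polar bilinear form of `Q`. -/
theorem stmt_1 (p : ℕ) [Fact p.Prime] (hp : Odd p) (m r : ℕ) (hm : 0 < m)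
    (Q : QuadraticForm (ZMod p) (Fin m → ZMod p))
    (hr : r = m - Module.finrank (ZMod p)
      (LinearMap.ker (QuadraticMap.polarBilin Q))) :
    (Even r → ∃ ε : ℤ, (ε = 1 ∨ ε = -1) ∧
      ∑ y ∈ ({0}ᶜ : Finset (ZMod p)), ∑ x : Fin m → ZMod p, zetaC p (y * Q x)
        = (ε : ℂ) * ((p : ℂ) - 1) * (p : ℂ) ^ (m - r / 2)) ∧
    (Odd r →
      ∑ y ∈ ({0}ᶜ : Finset (ZMod p)), ∑ x : Fin m → ZMod p, zetaC p (y * Q x) = 0) := by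
  classical
  have hpp : p.Prime := Fact.out
  have hp2 : p ≠ 2 := by
    rintro rfl
    exact absurd hp (by decide)
  have h2 : (2 : ZMod p) ≠ 0 := by
    rw [show (2 : ZMod p) = ((2 : ℕ) : ZMod p) by norm_num, Ne,
      ZMod.natCast_eq_zero_iff]
    intro h
    exact hp2 ((Nat.prime_dvd_prime_iff_eq hpp Nat.prime_two).mp h)
  haveI : Invertible (2 : ZMod p) := invertibleOfNonzero h2
  have hfr : Module.finrank (ZMod p) (Fin m → ZMod p) = m := by
    rw [Module.finrank_fintype_fun_eq_card, Fintype.card_fin]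
  obtain ⟨w, ⟨e⟩⟩ := QuadraticForm.equivalent_weightedSumSquares Q
  set g := gaussSum (chiC p) (psiC p) with hg
  set s := (Finset.univ.filter fun i => ¬ w i = 0).card with hs
  have hcard : (Finset.univ.filter fun i => w i = 0).card + s = m := by
    rw [hs, Finset.card_filter_add_card_filter_not, Finset.card_univ,
      Fintype.card_fin, hfr]
  have hker : Module.finrank (ZMod p) (LinearMap.ker (polarBilin Q))
      = (Finset.univ.filter fun i => w i = 0).card := by
    rw [finrank_ker_polarBilin_eq e, finrank_ker_weighted hp2]
  have hr2 : r = m - (Finset.univ.filter fun i => w i = 0).card := by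
    rw [hr, hker]
  have hrs : r = s := by omega
  have hsm : s ≤ m := by omega
  set P := ∏ i ∈ Finset.univ.filter (fun i => ¬ w i = 0), chiC p (w i) with hP
  have htrans : ∀ y : ZMod p,
      ∑ x : Fin m → ZMod p, zetaC p (y * Q x)
        = ∑ x, psiC p (y * weightedSumSquares (ZMod p) w x) := by
    intro y
    rw [← Equiv.sum_comp e.toLinearEquiv.toEquiv
      (fun x => psiC p (y * weightedSumSquares (ZMod p) w x))]
    refine Finset.sum_congr rfl fun x _ => ?_
    rw [← psiC_apply]
    have happ : weightedSumSquares (ZMod p) w (e.toLinearEquiv.toEquiv x) = Q x :=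
      e.map_app' x
    rw [happ]
  have hyval : ∀ y : ZMod p, y ≠ 0 →
      ∑ x, psiC p (y * weightedSumSquares (ZMod p) w x)
        = (chiC p y) ^ s * ((p : ℂ) ^ (m - s) * P * g ^ s) := by
    intro y hy
    rw [sum_psi_weighted hp2 w hy, Finset.prod_ite, Finset.prod_const]
    have h1 : ∏ i ∈ Finset.univ.filter (fun i => ¬ w i = 0),
        (chiC p (y * w i) * g) = ((chiC p y) ^ s * P) * g ^ s := by
      rw [Finset.prod_mul_distrib, Finset.prod_const, ← hs]
      congr 1
      rw [Finset.prod_congr rfl (fun i _ => map_mul (chiC p) y (w i)),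
        Finset.prod_mul_distrib, Finset.prod_const, ← hs, ← hP]
    rw [h1]
    have hcardeq : (Finset.univ.filter fun i => w i = 0).card = m - s := by omega
    rw [hcardeq]
    ring
  have main : ∑ y ∈ ({0}ᶜ : Finset (ZMod p)), ∑ x : Fin m → ZMod p, zetaC p (y * Q x)
      = (∑ y ∈ ({0}ᶜ : Finset (ZMod p)), (chiC p y) ^ s)
          * ((p : ℂ) ^ (m - s) * P * g ^ s) := by
    rw [Finset.sum_mul]
    refine Finset.sum_congr rfl fun y hy => ?_
    have hy0 : y ≠ 0 := by simpa using hy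
    rw [htrans y, hyval y hy0]
  constructor
  · intro hre
    have hse : Even s := hrs ▸ hre
    obtain ⟨k, hk⟩ := hse
    have hsum1 : ∑ y ∈ ({0}ᶜ : Finset (ZMod p)), (chiC p y) ^ s = ((p : ℂ) - 1) := by
      have hone : ∀ y ∈ ({0}ᶜ : Finset (ZMod p)), (chiC p y) ^ s = 1 := by
        intro y hy
        have hy0 : y ≠ 0 := by simpa using hy
        have hu : IsUnit y := isUnit_iff_ne_zero.mpr hy0
        calc (chiC p y) ^ s = (chiC p ^ s) hu.unit := by
              rw [MulChar.pow_apply_coe, IsUnit.unit_spec]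
          _ = (1 : MulChar (ZMod p) ℂ) hu.unit := by
              rw [(chiC_quad p).pow_even ⟨k, hk⟩]
          _ = 1 := MulChar.one_apply_coe _
      rw [Finset.sum_congr rfl hone, Finset.sum_const, Finset.card_compl,
        Finset.card_singleton, ZMod.card, nsmul_eq_mul, mul_one,
        Nat.cast_sub hpp.one_lt.le, Nat.cast_one]
    have hg2 : g ^ 2 = chiC p (-1) * p := by
      rw [hg, gaussSum_sq (chiC_ne_one p hp2) (chiC_quad p) (psiC_primitive p), ZMod.card]
    have hgs : g ^ s = (chiC p (-1)) ^ (s / 2) * (p : ℂ) ^ (s / 2) := by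
      have hs2 : s = 2 * (s / 2) := by omega
      calc g ^ s = (g ^ 2) ^ (s / 2) := by rw [← pow_mul, ← hs2]
        _ = (chiC p (-1)) ^ (s / 2) * (p : ℂ) ^ (s / 2) := by rw [hg2, mul_pow]
    refine ⟨(quadraticChar (ZMod p) (-1)) ^ (s / 2)
      * ∏ i ∈ Finset.univ.filter (fun i => ¬ w i = 0),
          quadraticChar (ZMod p) (w i), ?_, ?_⟩
    · have hne1 : (-1 : ZMod p) ≠ 0 := by
        intro h
        exact one_ne_zero (α := ZMod p) (neg_eq_zero.mp h)
      have hA : ((quadraticChar (ZMod p) (-1)) ^ (s / 2))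
          * ((quadraticChar (ZMod p) (-1)) ^ (s / 2)) = 1 := by
        rw [← pow_add, ← two_mul, pow_mul, quadraticChar_sq_one hne1, one_pow]
      have hB : (∏ i ∈ Finset.univ.filter (fun i => ¬ w i = 0),
            quadraticChar (ZMod p) (w i))
          * (∏ i ∈ Finset.univ.filter (fun i => ¬ w i = 0),
            quadraticChar (ZMod p) (w i)) = 1 := by
        calc (∏ i ∈ Finset.univ.filter (fun i => ¬ w i = 0),
              quadraticChar (ZMod p) (w i))
            * (∏ i ∈ Finset.univ.filter (fun i => ¬ w i = 0),
              quadraticChar (ZMod p) (w i))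
            = ∏ i ∈ Finset.univ.filter (fun i => ¬ w i = 0),
                (quadraticChar (ZMod p) (w i) * quadraticChar (ZMod p) (w i)) :=
              (Finset.prod_mul_distrib).symm
          _ = ∏ i ∈ Finset.univ.filter (fun i => ¬ w i = 0), (1 : ℤ) := by
              refine Finset.prod_congr rfl fun i hi => ?_
              have hwi : w i ≠ 0 := by simpa using (Finset.mem_filter.mp hi).2
              rw [← pow_two, quadraticChar_sq_one hwi]
          _ = 1 := Finset.prod_const_one
      have hsq := mul_mul_mul_comm ((quadraticChar (ZMod p) (-1)) ^ (s / 2))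
        (∏ i ∈ Finset.univ.filter (fun i => ¬ w i = 0), quadraticChar (ZMod p) (w i))
        ((quadraticChar (ZMod p) (-1)) ^ (s / 2))
        (∏ i ∈ Finset.univ.filter (fun i => ¬ w i = 0), quadraticChar (ZMod p) (w i))
      rw [hA, hB, mul_one] at hsq
      exact Int.isUnit_iff.mp (IsUnit.of_mul_eq_one _ hsq)
    · rw [main, hsum1, hgs]
      have hcast : ((((quadraticChar (ZMod p) (-1)) ^ (s / 2)
          * ∏ i ∈ Finset.univ.filter (fun i => ¬ w i = 0),
              quadraticChar (ZMod p) (w i) : ℤ)) : ℂ)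
          = (chiC p (-1)) ^ (s / 2) * P := by
        push_cast
        rw [hP]
        rfl
      rw [hcast]
      have hexp : m - r / 2 = (m - s) + s / 2 := by omega
      rw [hexp, pow_add]
      ring
  · intro hro
    have hso : Odd s := hrs ▸ hro
    rw [main]
    have hzero : ∑ y ∈ ({0}ᶜ : Finset (ZMod p)), (chiC p y) ^ s = 0 := by
      have heq : ∀ y ∈ ({0}ᶜ : Finset (ZMod p)), (chiC p y) ^ s = chiC p y := by
        intro y hy
        have hy0 : y ≠ 0 := by simpa using hy
        have hu : IsUnit y := isUnit_iff_ne_zero.mpr hy0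
        calc (chiC p y) ^ s = (chiC p ^ s) hu.unit := by
              rw [MulChar.pow_apply_coe, IsUnit.unit_spec]
          _ = chiC p hu.unit := by rw [(chiC_quad p).pow_odd hso]
          _ = chiC p y := by rw [IsUnit.unit_spec]
      rw [Finset.sum_congr rfl heq]
      have hall : ∑ y : ZMod p, chiC p y = 0 :=
        MulChar.sum_eq_zero_of_ne_one (chiC_ne_one p hp2)
      have hsplit := Finset.sum_add_sum_compl ({0} : Finset (ZMod p)) (fun y => chiC p y)
      rw [Finset.sum_singleton, MulChar.map_zero, zero_add, hall] at hsplit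
      exact hsplit
    rw [hzero, zero_mul]
end

section
/- For any (u,v,w) ∈ F³ with (u,v,w) ≠ (0,0,0), the quadratic form Q_{u,v,w}(x) = Tr(u x² + v x^{d₁} + w x^{d₂}) on F has rank at least m − 4 over 𝔽_p; equivalently, the 𝔽_p-subspace V = {x ∈ F : Q_{u,v,w}(x+z) − Q_{u,v,w}(x) − Q_{u,v,w}(z) = 0 for all z ∈ F} has cardinality at most p⁴. -/
open Finset Module LinearMap
set_option linter.unusedSectionVars false
set_option maxHeartbeats 1000000

section Aux

variable {p : ℕ} [Fact p.Prime] {F : Type} [Field F] [Fintype F] [Algebra (ZMod p) F]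

noncomputable def Lop (τ : F →ₐ[ZMod p] F) (a : ℕ → F) (n : ℕ) : Module.End (ZMod p) F :=
  ∑ i ∈ Finset.range n, LinearMap.mulLeft (ZMod p) (a i) * (τ.toLinearMap ^ i)

lemma Lop_apply (τ : F →ₐ[ZMod p] F) (a : ℕ → F) (n : ℕ) (x : F) :
    Lop τ a n x = ∑ i ∈ Finset.range n, a i * (τ.toLinearMap ^ i) x := by
  simp [Lop, LinearMap.sum_apply, Module.End.mul_apply]

lemma tau_pow_mul (τ : F →ₐ[ZMod p] F) (i : ℕ) (x y : F) :
    (τ.toLinearMap ^ i) (x * y) = (τ.toLinearMap ^ i) x * (τ.toLinearMap ^ i) y := by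
  induction i generalizing x y with
  | zero => simp
  | succ n ih =>
    simp only [pow_succ, Module.End.mul_apply, AlgHom.toLinearMap_apply, map_mul]
    exact ih _ _

lemma tau_inj (τ : F →ₐ[ZMod p] F) : Function.Injective τ :=
  RingHom.injective (τ : F →+* F)

lemma tau_pow_inj (τ : F →ₐ[ZMod p] F) (i : ℕ) :
    Function.Injective (τ.toLinearMap ^ i : Module.End (ZMod p) F) := by
  induction i with
  | zero => rw [pow_zero]; exact Function.injective_id
  | succ n ih =>
    rw [pow_succ]
    intro x y h
    simp only [Module.End.mul_apply, AlgHom.toLinearMap_apply] at h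
    exact tau_inj τ (ih h)

end Aux

section Aux2

variable {p : ℕ} [Fact p.Prime] {F : Type} [Field F] [Fintype F] [Algebra (ZMod p) F]

lemma tele {F : Type} [Field F] (N : ℕ) (t g : ℕ → F)
    (hsum : ∑ i ∈ Finset.range (N+1), t i = 0) :
    ∑ j ∈ Finset.range N, (∑ i ∈ Finset.Ico (j+1) (N+1), t i) * (g (j+1) - g j)
      = ∑ i ∈ Finset.range (N+1), t i * g i := by
  have swap : ∑ j ∈ Finset.range N, ∑ i ∈ Finset.Ico (j+1) (N+1), t i * (g (j+1) - g j)
      = ∑ i ∈ Finset.range (N+1), ∑ j ∈ Finset.range i, t i * (g (j+1) - g j) := by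
    refine Finset.sum_comm' ?_
    intro j i
    simp only [Finset.mem_range, Finset.mem_Ico]
    omega
  calc ∑ j ∈ Finset.range N, (∑ i ∈ Finset.Ico (j+1) (N+1), t i) * (g (j+1) - g j)
      = ∑ j ∈ Finset.range N, ∑ i ∈ Finset.Ico (j+1) (N+1), t i * (g (j+1) - g j) := by
        simp [Finset.sum_mul]
    _ = ∑ i ∈ Finset.range (N+1), ∑ j ∈ Finset.range i, t i * (g (j+1) - g j) := swap
    _ = ∑ i ∈ Finset.range (N+1), t i * (g i - g 0) := by
        refine Finset.sum_congr rfl fun i _ => ?_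
        rw [← Finset.mul_sum, Finset.sum_range_sub]
    _ = ∑ i ∈ Finset.range (N+1), t i * g i - (∑ i ∈ Finset.range (N+1), t i) * g 0 := by
        rw [Finset.sum_mul, ← Finset.sum_sub_distrib]
        exact Finset.sum_congr rfl fun i _ => by ring
    _ = ∑ i ∈ Finset.range (N+1), t i * g i := by rw [hsum]; ring

lemma card_fix_le : Nat.card {x : F // x ^ p = x} ≤ p := by
  classical
  have hp2 : 1 < p := (Fact.out : p.Prime).one_lt
  set q : Polynomial F := Polynomial.X ^ p - Polynomial.X with hq
  have hqd : q.natDegree = p := by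
    rw [hq, Polynomial.natDegree_sub_eq_left_of_natDegree_lt] <;>
      simp [Polynomial.natDegree_X_pow, Polynomial.natDegree_X] <;> omega
  have hq0 : q ≠ 0 := by
    intro h
    rw [h, Polynomial.natDegree_zero] at hqd
    omega
  have hmem : ∀ x : F, x ^ p = x → x ∈ q.roots.toFinset := by
    intro x hx
    rw [Multiset.mem_toFinset, Polynomial.mem_roots hq0]
    simp [Polynomial.IsRoot, hq, sub_eq_zero, hx]
  have h1 : Nat.card {x : F // x ^ p = x} ≤ q.roots.toFinset.card := by
    have := Nat.card_le_card_of_injective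
      (f := fun x : {x : F // x ^ p = x} => (⟨x.1, hmem x.1 x.2⟩ : {y : F // y ∈ q.roots.toFinset}))
      (fun a b hab => Subtype.ext (by simpa using congrArg Subtype.val hab))
    rwa [Nat.card_eq_finsetCard] at this
  refine h1.trans (le_trans (Multiset.toFinset_card_le _) ?_)
  simpa [hqd] using Polynomial.card_roots' q

lemma finrank_fix_le (τ : F →ₐ[ZMod p] F) (hfix : ∀ x : F, τ x = x → x ^ p = x) :
    Module.finrank (ZMod p) (LinearMap.ker (τ.toLinearMap - 1)) ≤ 1 := by
  by_contra hcon
  push_neg at hcon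
  set W := LinearMap.ker (τ.toLinearMap - 1) with hW
  have hcard : Nat.card W = p ^ Module.finrank (ZMod p) W := by
    letI : Fintype W := Fintype.ofFinite W
    rw [Nat.card_eq_fintype_card, card_eq_pow_finrank (K := ZMod p), ZMod.card]
  have hle : Nat.card W ≤ p := by
    refine le_trans (Nat.card_le_card_of_injective
      (f := fun x : W => (⟨x.1, ?_⟩ : {x : F // x ^ p = x})) ?_) card_fix_le
    · apply hfix
      have hx := LinearMap.mem_ker.mp x.2
      rw [LinearMap.sub_apply, Module.End.one_apply, sub_eq_zero, AlgHom.toLinearMap_apply] at hx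
      exact hx
    · exact fun a b hab => Subtype.ext (by simpa using congrArg Subtype.val hab)
  have hp2 : 2 ≤ p := (Fact.out : p.Prime).two_le
  have : p ^ 2 ≤ p ^ Module.finrank (ZMod p) W := Nat.pow_le_pow_right (by omega) hcon
  rw [← hcard] at this
  nlinarith

end Aux2

section Key

variable {p : ℕ} [Fact p.Prime] {F : Type} [Field F] [Fintype F] [Algebra (ZMod p) F]

theorem key_finrank (τ : F →ₐ[ZMod p] F) (hfix : ∀ x : F, τ x = x → x ^ p = x) :
    ∀ (n : ℕ) (a : ℕ → F), (∃ j, j ≤ n ∧ a j ≠ 0) →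
      Module.finrank (ZMod p) (LinearMap.ker (Lop τ a (n+1))) ≤ n := by
  haveI : Module.Finite (ZMod p) F := Module.Finite.of_finite
  intro n
  induction n with
  | zero =>
    rintro a ⟨j, hj, haj⟩
    interval_cases j
    have hker : LinearMap.ker (Lop τ a 1) = ⊥ := by
      rw [LinearMap.ker_eq_bot']
      intro x hx
      rw [Lop_apply] at hx
      simp only [Finset.sum_range_one, pow_zero, Module.End.one_apply] at hx
      exact (mul_eq_zero.mp hx).resolve_left haj
    rw [hker]
    simp [finrank_bot]
  | succ n ih =>
    rintro a ⟨j, hj, haj⟩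
    by_cases hbot : LinearMap.ker (Lop τ a (n+2)) = ⊥
    · rw [hbot]; simp [finrank_bot]
    obtain ⟨x₀, hx₀mem, hx₀⟩ := Submodule.exists_mem_ne_zero_of_ne_bot hbot
    set τl := τ.toLinearMap with hτl
    set ta : ℕ → F := fun i => a i * (τl ^ i) x₀ with hta
    have hsum : ∑ i ∈ Finset.range (n+2), ta i = 0 := by
      have h := LinearMap.mem_ker.mp hx₀mem
      rwa [Lop_apply] at h
    set b : ℕ → F := fun j => ∑ i ∈ Finset.Ico (j+1) (n+2), ta i with hb
    have hpowsub : ∀ (j : ℕ) (x : F), (τl ^ j) ((τl - 1) x) = (τl ^ (j+1)) x - (τl ^ j) x := by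
      intro j x
      rw [LinearMap.sub_apply, Module.End.one_apply, map_sub, pow_succ, Module.End.mul_apply]
    have hfact : ∀ x : F, Lop τ b (n+1) ((τl - 1) x) = Lop τ ta (n+2) x := by
      intro x
      rw [Lop_apply, Lop_apply]
      rw [Finset.sum_congr rfl fun i _ => by rw [hpowsub]]
      exact tele (n+1) ta (fun j => (τl ^ j) x) hsum
    have hcomp : ∀ x : F, Lop τ ta (n+2) x = Lop τ a (n+2) (x₀ * x) := by
      intro x
      rw [Lop_apply, Lop_apply]
      refine Finset.sum_congr rfl fun i _ => ?_
      rw [tau_pow_mul]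
      ring
    -- the multiplication-by-x₀ equivalence
    have hbij : Function.Bijective (LinearMap.mulLeft (ZMod p) x₀) := by
      constructor
      · intro x y hxy
        simpa using mul_left_cancel₀ hx₀ (by simpa using hxy)
      · intro y
        exact ⟨x₀⁻¹ * y, by simp [LinearMap.mulLeft_apply, ← mul_assoc, mul_inv_cancel₀ hx₀]⟩
    set e : F ≃ₗ[ZMod p] F := LinearEquiv.ofBijective _ hbij with he
    have hkercomap : LinearMap.ker (Lop τ ta (n+2))
        = Submodule.comap (e : F →ₗ[ZMod p] F) (LinearMap.ker (Lop τ a (n+2))) := by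
      ext x
      simp only [LinearMap.mem_ker, Submodule.mem_comap, he, LinearEquiv.coe_coe,
        LinearEquiv.ofBijective_apply, LinearMap.mulLeft_apply]
      rw [hcomp x]
    have hrank_eq : Module.finrank (ZMod p) (LinearMap.ker (Lop τ ta (n+2)))
        = Module.finrank (ZMod p) (LinearMap.ker (Lop τ a (n+2))) := by
      rw [hkercomap, Submodule.comap_equiv_eq_map_symm]
      exact ((e.symm.submoduleMap _).finrank_eq).symm
    -- coefficients b are not all zero
    have hbne : ∃ j, j ≤ n ∧ b j ≠ 0 := by
      by_contra hall
      push_neg at hall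
      have hbtop : b (n+1) = 0 := by
        rw [hb]; simp
    -- hall : ∀ j ≤ n, b j = 0
      have hball : ∀ j, j ≤ n + 1 → b j = 0 := by
        intro j hj'
        rcases Nat.lt_or_ge j (n+1) with h | h
        · exact hall j (by omega)
        · have : j = n + 1 := by omega
          rw [this]; exact hbtop
      have hta0 : ∀ i, i ≤ n + 1 → ta i = 0 := by
        intro i hi
        match i with
        | 0 =>
          have h0 : ∑ i ∈ Finset.range (n+2), ta i = ta 0 + b 0 := by
            rw [Finset.range_eq_Ico, Finset.sum_eq_sum_Ico_succ_bot (by omega)]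
          have hb0 : b 0 = 0 := hball 0 (by omega)
          rw [hsum] at h0  -- ?
          rw [hb0, add_zero] at h0
          exact h0.symm
        | (i+1) =>
          have hsplit : b i = ta (i+1) + b (i+1) := by
            rw [hb]
            exact Finset.sum_eq_sum_Ico_succ_bot (by omega) _
          have h1 : b i = 0 := hball i (by omega)
          have h2 : b (i+1) = 0 := hball (i+1) (by omega)
          rw [h1, h2, add_zero] at hsplit
          exact hsplit.symm
      have htane : ta j ≠ 0 := by
        have hne : (τl ^ j) x₀ ≠ 0 := by
          intro h
          exact hx₀ (tau_pow_inj τ j (by simpa using h))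
        exact mul_ne_zero haj hne
      exact htane (hta0 j hj)
    -- the restriction map
    have hg : ∀ x : F, x ∈ LinearMap.ker (Lop τ ta (n+2)) → (τl - 1) x ∈ LinearMap.ker (Lop τ b (n+1)) := by
      intro x hx
      rw [LinearMap.mem_ker, hfact x]
      exact hx
    set g : LinearMap.ker (Lop τ ta (n+2)) →ₗ[ZMod p] LinearMap.ker (Lop τ b (n+1)) :=
      LinearMap.codRestrict _ ((τl - 1) ∘ₗ (LinearMap.ker (Lop τ ta (n+2))).subtype)
        (fun c => by simpa [LinearMap.comp_apply] using hg c.1 c.2) with hgdef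
    have hrn := LinearMap.finrank_range_add_finrank_ker g
    have h1 : Module.finrank (ZMod p) (LinearMap.range g) ≤ n :=
      le_trans (Submodule.finrank_le _) (ih b hbne)
    have h2 : Module.finrank (ZMod p) (LinearMap.ker g) ≤ 1 := by
      have hmem : ∀ y : LinearMap.ker g,
          ((LinearMap.ker (Lop τ ta (n+2))).subtype ((LinearMap.ker g).subtype y)) ∈ LinearMap.ker (τl - 1) := by
        intro y
        have hy : g y.1 = 0 := y.2
        have h' : ((g y.1 : F)) = 0 := by rw [hy]; rfl
        exact h'
      refine le_trans (LinearMap.finrank_le_finrank_of_injective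
        (f := LinearMap.codRestrict _
          (((LinearMap.ker (Lop τ ta (n+2))).subtype).comp ((LinearMap.ker g)).subtype) hmem) ?_)
        (finrank_fix_le τ hfix)
      intro x y hxy
      have hval := congrArg Subtype.val hxy
      exact Subtype.ext (Subtype.ext hval)
    rw [← hrank_eq]
    omega

end Key

section Main

variable {p : ℕ} [Fact p.Prime] {F : Type} [Field F] [Fintype F] [Algebra (ZMod p) F]

lemma key_card (τ : F →ₐ[ZMod p] F) (hfix : ∀ x : F, τ x = x → x ^ p = x)
    (n : ℕ) (a : ℕ → F) (h : ∃ j, j ≤ n ∧ a j ≠ 0) :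
    Nat.card (LinearMap.ker (Lop τ a (n+1))) ≤ p ^ n := by
  haveI : Module.Finite (ZMod p) F := Module.Finite.of_finite
  have h1 := key_finrank τ hfix n a h
  have hcard : Nat.card (LinearMap.ker (Lop τ a (n+1)))
      = p ^ Module.finrank (ZMod p) (LinearMap.ker (Lop τ a (n+1))) := by
    letI : Fintype (LinearMap.ker (Lop τ a (n+1))) := Fintype.ofFinite _
    rw [Nat.card_eq_fintype_card, card_eq_pow_finrank (K := ZMod p), ZMod.card]
  rw [hcard]
  exact Nat.pow_le_pow_right (Fact.out : p.Prime).pos h1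

lemma zmod_pow_pow (r : ZMod p) (n : ℕ) : r ^ p ^ n = r := by
  induction n with
  | zero => simp
  | succ n ih => rw [pow_succ, pow_mul, ih, ZMod.pow_card]

/-- The `p^j`-power Frobenius as an algebra endomorphism of `F` over `ZMod p`. -/
noncomputable def frobAlg (p : ℕ) [Fact p.Prime] (F : Type) [Field F] [Algebra (ZMod p) F]
    (j : ℕ) : F →ₐ[ZMod p] F :=
  letI : CharP F p := charP_of_injective_algebraMap (algebraMap (ZMod p) F).injective p
  letI : ExpChar F p := ExpChar.prime (Fact.out : p.Prime)
  { toFun := fun x => x ^ p ^ j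
    map_one' := one_pow _
    map_mul' := fun x y => mul_pow x y _
    map_zero' := zero_pow (pow_ne_zero _ (Fact.out : p.Prime).ne_zero)
    map_add' := fun x y => add_pow_char_pow x y p j
    commutes' := fun r => by
      show (algebraMap (ZMod p) F r) ^ p ^ j = algebraMap (ZMod p) F r
      rw [← map_pow, zmod_pow_pow] }

lemma frobAlg_apply (j : ℕ) (x : F) : frobAlg p F j x = x ^ p ^ j := rfl

lemma trace_frob (y : F) :
    Algebra.trace (ZMod p) F (y ^ p) = Algebra.trace (ZMod p) F y := by
  haveI : Module.Finite (ZMod p) F := Module.Finite.of_finite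
  set σ : F ≃ₐ[ZMod p] F :=
    AlgEquiv.ofBijective (frobAlg p F 1) ((Finite.injective_iff_bijective).mp (tau_inj _)) with hσ
  have hσap : ∀ x : F, σ x = x ^ p := fun x => by
    rw [hσ, AlgEquiv.coe_ofBijective, frobAlg_apply, pow_one]
  have hconj : (Algebra.lmul (ZMod p) F) (σ y)
      = σ.toLinearMap * (Algebra.lmul (ZMod p) F) y * σ.symm.toLinearMap := by
    ext z
    simp only [Module.End.mul_apply, AlgEquiv.toLinearMap_apply, Algebra.coe_lmul_eq_mul,
      LinearMap.mul_apply', map_mul, AlgEquiv.apply_symm_apply]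
  have hid : σ.symm.toLinearMap * σ.toLinearMap = 1 := by
    ext z
    simp [Module.End.mul_apply]
  calc Algebra.trace (ZMod p) F (y ^ p) = Algebra.trace (ZMod p) F (σ y) := by rw [hσap]
    _ = Algebra.trace (ZMod p) F y := by
        rw [Algebra.trace_apply, Algebra.trace_apply, hconj, LinearMap.trace_mul_comm,
          ← mul_assoc, hid, one_mul]

end Main

section Final

variable {p : ℕ} [Fact p.Prime] {F : Type} [Field F] [Fintype F] [Algebra (ZMod p) F]

lemma pow_iter (x : F) (a : ℕ) (hx : x ^ p ^ a = x) (j : ℕ) : x ^ p ^ (a * j) = x := by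
  induction j with
  | zero => simp
  | succ j ih => rw [Nat.mul_succ, pow_add, pow_mul, ih, hx]

lemma trace_frob_pow (y : F) (n : ℕ) :
    Algebra.trace (ZMod p) F (y ^ p ^ n) = Algebra.trace (ZMod p) F y := by
  induction n with
  | zero => simp
  | succ n ih => rw [pow_succ, pow_mul, trace_frob, ih]

lemma frobAlg_pow_apply (k i : ℕ) (x : F) :
    ((frobAlg p F k).toLinearMap ^ i) x = x ^ p ^ (k * i) := by
  induction i with
  | zero => simp
  | succ i ih =>
    rw [pow_succ', Module.End.mul_apply, AlgHom.toLinearMap_apply, frobAlg_apply, ih,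
      ← pow_mul, ← pow_add, ← Nat.mul_succ]

end Final

/-- Lemma 2.3: For `(u,v,w) ≠ (0,0,0)` in `F³`, `F = 𝔽_{p^m}`, the quadratic
form `Q_{u,v,w}(x) = Tr(ux² + vx^{p^k+1} + wx^{p^{2k}+1})` has rank at least
`m - 4`, i.e. its radical `V` has cardinality at most `p⁴`. -/
theorem stmt_2 (p m k : ℕ) [Fact p.Prime] (hp : Odd p) (hm5 : 5 ≤ m) (hm : Odd m)
    (hk : 0 < k) (hgcd : Nat.gcd m k = 1)
    (F : Type) [Field F] [Fintype F] [Algebra (ZMod p) F]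
    (hF : Fintype.card F = p ^ m)
    (u v w : F) (huvw : (u, v, w) ≠ (0, 0, 0)) :
    Nat.card {x : F // ∀ z : F,
      Algebra.trace (ZMod p) F
          (u * (x + z) ^ 2 + v * (x + z) ^ (p ^ k + 1) + w * (x + z) ^ (p ^ (2 * k) + 1))
        - Algebra.trace (ZMod p) F
          (u * x ^ 2 + v * x ^ (p ^ k + 1) + w * x ^ (p ^ (2 * k) + 1))
        - Algebra.trace (ZMod p) F
          (u * z ^ 2 + v * z ^ (p ^ k + 1) + w * z ^ (p ^ (2 * k) + 1)) = 0}
      ≤ p ^ 4 := by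
  haveI : CharP F p := charP_of_injective_algebraMap (algebraMap (ZMod p) F).injective p
  haveI : ExpChar F p := ExpChar.prime Fact.out
  haveI : Module.Finite (ZMod p) F := Module.Finite.of_finite
  haveI : Algebra.IsAlgebraic (ZMod p) F := Algebra.IsAlgebraic.of_finite _ _
  have hppos : p ≠ 0 := (Fact.out : p.Prime).ne_zero
  have hcardF : ∀ x : F, x ^ p ^ m = x := fun x => by
    rw [← hF]; exact FiniteField.pow_card x
  have hmk : ∀ y : F, y ^ p ^ (m * k) = y := fun y => pow_iter y m (hcardF y) k
  set τ : F →ₐ[ZMod p] F := frobAlg p F k with hτ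
  -- fixed points of τ lie in the prime field
  have hfix : ∀ x : F, τ x = x → x ^ p = x := by
    intro x hx
    rw [hτ, frobAlg_apply] at hx
    rcases Nat.lt_or_ge k 2 with hk2 | hk2
    · have hk1 : k = 1 := by omega
      rw [hk1, pow_one] at hx
      exact hx
    · obtain ⟨s, -, hs⟩ := Nat.exists_mul_mod_eq_one_of_coprime hgcd hk2
      have hdm := Nat.div_add_mod (m * s) k
      rw [hs] at hdm
      have h1 : x ^ p ^ (m * s) = x := pow_iter x m (hcardF x) s
      have h2 : x ^ p ^ (k * (m * s / k)) = x := pow_iter x k hx _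
      have h3 : x ^ p ^ (m * s) = (x ^ p ^ (k * (m * s / k))) ^ p := by
        rw [← pow_mul, ← pow_succ, hdm]
      rw [h1, h2] at h3
      exact h3.symm
  -- coefficients of the linearized polynomial
  set a : ℕ → F :=
    fun i => [w, v ^ p ^ k, (2 * u) ^ p ^ (2 * k), v ^ p ^ (2 * k), w ^ p ^ (2 * k)].getD i 0
    with ha
  have h2F : (2 : F) ≠ 0 := by
    intro h2
    have hdvd := (CharP.cast_eq_zero_iff F p 2).mp (by exact_mod_cast h2)
    have := Nat.le_of_dvd (by norm_num) hdvd
    rcases hp with ⟨j, hj⟩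
    have := (Fact.out : p.Prime).two_le
    omega
  have hane : ∃ j, j ≤ 4 ∧ a j ≠ 0 := by
    have hnall : ¬(u = 0 ∧ v = 0 ∧ w = 0) := by
      intro ⟨h1, h2, h3⟩
      exact huvw (by rw [h1, h2, h3])
    by_cases hu : u = 0
    · by_cases hv : v = 0
      · have hw : w ≠ 0 := fun hw => hnall ⟨hu, hv, hw⟩
        exact ⟨0, by norm_num, by simpa [ha] using hw⟩
      · exact ⟨1, by norm_num, by simpa [ha] using pow_ne_zero (p ^ k) hv⟩
    · exact ⟨2, by norm_num, by simpa [ha] using pow_ne_zero (p ^ (2*k)) (mul_ne_zero h2F hu)⟩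
  -- exponent arithmetic
  have ee1 : k + k * (m - 1) = m * k := by
    obtain ⟨m', rfl⟩ : ∃ m', m = m' + 5 := ⟨m - 5, by omega⟩
    have : m' + 5 - 1 = m' + 4 := by omega
    rw [this]; ring
  have ee2 : 2 * k + k * (m - 2) = m * k := by
    obtain ⟨m', rfl⟩ : ∃ m', m = m' + 5 := ⟨m - 5, by omega⟩
    have : m' + 5 - 2 = m' + 3 := by omega
    rw [this]; ring
  have ee3 : k * (m - 1) + 2 * k = m * k + k := by omega
  have ee4 : k * (m - 2) + 2 * k = m * k := by omega
  have hiff : ∀ x : F,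
      (∀ z : F,
        Algebra.trace (ZMod p) F
            (u * (x + z) ^ 2 + v * (x + z) ^ (p ^ k + 1) + w * (x + z) ^ (p ^ (2 * k) + 1))
          - Algebra.trace (ZMod p) F
            (u * x ^ 2 + v * x ^ (p ^ k + 1) + w * x ^ (p ^ (2 * k) + 1))
          - Algebra.trace (ZMod p) F
            (u * z ^ 2 + v * z ^ (p ^ k + 1) + w * z ^ (p ^ (2 * k) + 1)) = 0)
        ↔ x ∈ LinearMap.ker (Lop τ a 5) := by
    intro x
    set G : F := 2 * u * x + v * x ^ p ^ k + w * x ^ p ^ (2 * k)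
        + (v * x) ^ p ^ (k * (m - 1)) + (w * x) ^ p ^ (k * (m - 2)) with hG
    have step1 : ∀ z : F,
        Algebra.trace (ZMod p) F
            (u * (x + z) ^ 2 + v * (x + z) ^ (p ^ k + 1) + w * (x + z) ^ (p ^ (2 * k) + 1))
          - Algebra.trace (ZMod p) F
            (u * x ^ 2 + v * x ^ (p ^ k + 1) + w * x ^ (p ^ (2 * k) + 1))
          - Algebra.trace (ZMod p) F
            (u * z ^ 2 + v * z ^ (p ^ k + 1) + w * z ^ (p ^ (2 * k) + 1))
          = Algebra.trace (ZMod p) F (G * z) := by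
      intro z
      rw [← map_sub, ← map_sub]
      have e1 : (x + z) ^ p ^ k = x ^ p ^ k + z ^ p ^ k := add_pow_char_pow x z p k
      have e2 : (x + z) ^ p ^ (2 * k) = x ^ p ^ (2 * k) + z ^ p ^ (2 * k) :=
        add_pow_char_pow x z p (2 * k)
      have e1' : (x + z) ^ (p ^ k + 1) = (x ^ p ^ k + z ^ p ^ k) * (x + z) := by
        rw [pow_succ, e1]
      have e2' : (x + z) ^ (p ^ (2 * k) + 1)
          = (x ^ p ^ (2 * k) + z ^ p ^ (2 * k)) * (x + z) := by
        rw [pow_succ, e2]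
      have harg : u * (x + z) ^ 2 + v * (x + z) ^ (p ^ k + 1) + w * (x + z) ^ (p ^ (2 * k) + 1)
            - (u * x ^ 2 + v * x ^ (p ^ k + 1) + w * x ^ (p ^ (2 * k) + 1))
            - (u * z ^ 2 + v * z ^ (p ^ k + 1) + w * z ^ (p ^ (2 * k) + 1))
          = (2 * u * x + v * x ^ p ^ k + w * x ^ p ^ (2 * k)) * z
            + v * x * z ^ p ^ k + w * x * z ^ p ^ (2 * k) := by
        rw [e1', e2']
        ring
      rw [harg, map_add, map_add]
      have e3 : Algebra.trace (ZMod p) F (v * x * z ^ p ^ k)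
          = Algebra.trace (ZMod p) F ((v * x) ^ p ^ (k * (m - 1)) * z) := by
        rw [← trace_frob_pow (v * x * z ^ p ^ k) (k * (m - 1))]
        congr 1
        have hz : (z ^ p ^ k) ^ p ^ (k * (m - 1)) = z := by
          rw [← pow_mul, ← pow_add, ee1]
          exact hmk z
        rw [mul_pow, hz]
      have e4 : Algebra.trace (ZMod p) F (w * x * z ^ p ^ (2 * k))
          = Algebra.trace (ZMod p) F ((w * x) ^ p ^ (k * (m - 2)) * z) := by
        rw [← trace_frob_pow (w * x * z ^ p ^ (2 * k)) (k * (m - 2))]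
        congr 1
        have hz : (z ^ p ^ (2 * k)) ^ p ^ (k * (m - 2)) = z := by
          rw [← pow_mul, ← pow_add, ee2]
          exact hmk z
        rw [mul_pow, hz]
      rw [e3, e4, ← map_add, ← map_add]
      congr 1
      rw [hG]
      ring
    -- the `p^(2k)`-th power of `G` is the linearized polynomial at `x`
    have hx2 : ∀ i : ℕ, (x ^ p ^ i) ^ p ^ (2 * k) = x ^ p ^ (i + 2 * k) := fun i => by
      rw [← pow_mul, ← pow_add]
    have hGpow : G ^ p ^ (2 * k) = Lop τ a 5 x := by
      have hadd : ∀ A B : F, (A + B) ^ p ^ (2 * k) = A ^ p ^ (2 * k) + B ^ p ^ (2 * k) :=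
        fun A B => add_pow_char_pow A B p (2 * k)
      have ht4 : ((v * x) ^ p ^ (k * (m - 1))) ^ p ^ (2 * k) = v ^ p ^ k * x ^ p ^ k := by
        rw [← pow_mul, ← pow_add, ee3, pow_add, pow_mul, hmk (v * x), mul_pow]
      have ht5 : ((w * x) ^ p ^ (k * (m - 2))) ^ p ^ (2 * k) = w * x := by
        rw [← pow_mul, ← pow_add, ee4, hmk (w * x)]
      have hlop : Lop τ a 5 x
          = w * x + v ^ p ^ k * x ^ p ^ (k * 1) + (2 * u) ^ p ^ (2 * k) * x ^ p ^ (k * 2)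
            + v ^ p ^ (2 * k) * x ^ p ^ (k * 3) + w ^ p ^ (2 * k) * x ^ p ^ (k * 4) := by
        rw [Lop_apply, Finset.sum_range_succ, Finset.sum_range_succ, Finset.sum_range_succ,
          Finset.sum_range_succ, Finset.sum_range_one]
        simp only [hτ, frobAlg_pow_apply]
        simp [ha]
      rw [hG, hadd, hadd, hadd, hadd, ht4, ht5, mul_pow (2 * u) x, mul_pow v _, mul_pow w _,
        hx2 k, hx2 (2 * k), hlop]
      have c1 : k + 2 * k = k * 3 := by ring
      have c2 : 2 * k + 2 * k = k * 4 := by ring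
      have c3 : 2 * k = k * 2 := by ring
      have c4 : k = k * 1 := by ring
      rw [c1, c2]
      calc (2 * u) ^ p ^ (2 * k) * x ^ p ^ (2 * k) + v ^ p ^ (2 * k) * x ^ p ^ (k * 3)
            + w ^ p ^ (2 * k) * x ^ p ^ (k * 4) + v ^ p ^ k * x ^ p ^ k + w * x
          = w * x + v ^ p ^ k * x ^ p ^ k + (2 * u) ^ p ^ (2 * k) * x ^ p ^ (2 * k)
            + v ^ p ^ (2 * k) * x ^ p ^ (k * 3) + w ^ p ^ (2 * k) * x ^ p ^ (k * 4) := by ring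
        _ = _ := by rw [← c3, ← c4]
    have hP : p ^ (2 * k) ≠ 0 := pow_ne_zero _ hppos
    constructor
    · intro h
      rw [LinearMap.mem_ker, ← hGpow]
      have hG0 : G = 0 := by
        have hTr : ∀ z : F, Algebra.trace (ZMod p) F (G * z) = 0 := fun z => by
          rw [← step1 z]; exact h z
        exact (traceForm_nondegenerate (ZMod p) F).1 G
          (fun z => by simpa [Algebra.traceForm_apply] using hTr z)
      rw [hG0]
      exact zero_pow hP
    · intro hker z
      rw [step1 z]
      have hG0 : G = 0 := by
        have : G ^ p ^ (2 * k) = 0 := by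
          rw [hGpow]; exact LinearMap.mem_ker.mp hker
        exact pow_eq_zero_iff hP |>.mp this
      simp [hG0]
  calc Nat.card {x : F // ∀ z : F,
      Algebra.trace (ZMod p) F
          (u * (x + z) ^ 2 + v * (x + z) ^ (p ^ k + 1) + w * (x + z) ^ (p ^ (2 * k) + 1))
        - Algebra.trace (ZMod p) F
          (u * x ^ 2 + v * x ^ (p ^ k + 1) + w * x ^ (p ^ (2 * k) + 1))
        - Algebra.trace (ZMod p) F
          (u * z ^ 2 + v * z ^ (p ^ k + 1) + w * z ^ (p ^ (2 * k) + 1)) = 0}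
      = Nat.card (LinearMap.ker (Lop τ a 5)) :=
        Nat.card_congr (Equiv.subtypeEquivRight hiff)
    _ ≤ p ^ 4 := key_card τ hfix 4 a hane
end

section
/- The number of solutions (x₁,x₂,y₁,y₂) ∈ F² × (𝔽_p \ {0})² of the system y₁x₁² + y₂x₂² = 0 and y₁x₁^{d₁} + y₂x₂^{d₁} = 0 is (p-1)²·p^m. -/
open Polynomial

lemma aux1 (p : ℕ) [Fact p.Prime] (F : Type) [Field F] [Algebra (ZMod p) F]
    (t : F) (ht : t ^ p = t) : ∃ a : ZMod p, algebraMap (ZMod p) F a = t := by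
  classical
  set A := algebraMap (ZMod p) F with hA
  have hp1 : 1 < p := (Fact.out : p.Prime).one_lt
  set g : F[X] := X ^ p - X with hg
  have hg0 : g ≠ 0 := FiniteField.X_pow_card_sub_X_ne_zero F hp1
  have hdeg : g.natDegree = p := FiniteField.X_pow_card_sub_X_natDegree_eq F hp1
  have hroot : ∀ a : ZMod p, IsRoot g (A a) := by
    intro a
    simp only [hg, IsRoot, eval_sub, eval_pow, eval_X, sub_eq_zero]
    rw [← map_pow, ZMod.pow_card]
  have hS : (Finset.univ.image A) ⊆ g.roots.toFinset := by
    intro x hx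
    simp only [Finset.mem_image] at hx
    obtain ⟨a, _, rfl⟩ := hx
    rw [Multiset.mem_toFinset, mem_roots hg0]
    exact hroot a
  have hAinj : Function.Injective A := (algebraMap (ZMod p) F).injective
  have hcardS : (Finset.univ.image A).card = p := by
    rw [Finset.card_image_of_injective _ hAinj, Finset.card_univ, ZMod.card]
  have hcardR : g.roots.toFinset.card ≤ p := by
    calc g.roots.toFinset.card ≤ Multiset.card g.roots := g.roots.toFinset_card_le
    _ ≤ g.natDegree := g.card_roots' 
    _ = p := hdeg
  have heq : (Finset.univ.image A) = g.roots.toFinset :=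
    Finset.eq_of_subset_of_card_le hS (by rw [hcardS]; exact hcardR)
  have htr : t ∈ g.roots.toFinset := by
    rw [Multiset.mem_toFinset, mem_roots hg0]
    simp only [hg, IsRoot, eval_sub, eval_pow, eval_X, sub_eq_zero, ht]
  rw [← heq] at htr
  simpa using (Finset.mem_image.mp htr).imp (fun a h => h.2)

lemma aux2 (p m k : ℕ) [Fact p.Prime] (hgcd : Nat.gcd m k = 1)
    (F : Type) [Field F] [Fintype F] (hF : Fintype.card F = p ^ m)
    (t : F) (ht0 : t ≠ 0) (ht : t ^ p ^ k = t) : t ^ p = t := by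
  have hp1 : 1 < p := (Fact.out : p.Prime).one_lt
  have hpk1 : 1 ≤ p ^ k := Nat.one_le_pow _ _ (by omega)
  have hpm1 : 1 ≤ p ^ m := Nat.one_le_pow _ _ (by omega)
  have h1 : t ^ (p ^ k - 1) = 1 := by
    refine mul_right_cancel₀ ht0 ?_
    rw [one_mul, ← pow_succ, Nat.sub_add_cancel hpk1, ht]
  have h2 : t ^ (p ^ m - 1) = 1 := by
    rw [← hF]; exact FiniteField.pow_card_sub_one_eq_one t ht0
  set n := orderOf t with hn
  have hd1 : n ∣ p ^ k - 1 := orderOf_dvd_of_pow_eq_one h1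
  have hd2 : n ∣ p ^ m - 1 := orderOf_dvd_of_pow_eq_one h2
  -- in ZMod n, p^k = 1 and p^m = 1
  have hcast : ∀ j : ℕ, n ∣ p ^ j - 1 → (p : ZMod n) ^ j = 1 := by
    intro j hd
    have : ((p ^ j - 1 : ℕ) : ZMod n) = 0 := (ZMod.natCast_eq_zero_iff _ _).mpr hd
    have hj : 1 ≤ p ^ j := Nat.one_le_pow _ _ (by omega)
    rw [Nat.cast_sub hj] at this
    push_cast at this
    linear_combination this
  have hk1 : (p : ZMod n) ^ k = 1 := hcast k hd1
  have hm1 : (p : ZMod n) ^ m = 1 := hcast m hd2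
  have hdvd : orderOf (p : ZMod n) ∣ Nat.gcd m k :=
    Nat.dvd_gcd (orderOf_dvd_of_pow_eq_one hm1) (orderOf_dvd_of_pow_eq_one hk1)
  rw [hgcd, Nat.dvd_one, orderOf_eq_one_iff] at hdvd
  -- so p ≡ 1 mod n, hence n ∣ p - 1
  have hnd : n ∣ p - 1 := by
    have : ((p - 1 : ℕ) : ZMod n) = 0 := by
      rw [Nat.cast_sub (by omega)]; rw [hdvd]; ring
    exact (ZMod.natCast_eq_zero_iff _ _).mp this
  have h3 : t ^ (p - 1) = 1 := orderOf_dvd_iff_pow_eq_one.mp hnd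
  calc t ^ p = t ^ (p - 1 + 1) := by rw [Nat.sub_add_cancel (by omega)]
  _ = t ^ (p-1) * t := pow_succ t (p-1)
  _ = t := by rw [h3, one_mul]


/-- Lemma 3.2: the number of solutions `(x₁,x₂,y₁,y₂) ∈ F² × (𝔽_p*)²` of
`y₁x₁² + y₂x₂² = 0` and `y₁x₁^{d₁} + y₂x₂^{d₁} = 0`, with `d₁ = p^k + 1`,
is `(p-1)²·p^m`. -/
theorem stmt_3 (p m k : ℕ) [Fact p.Prime] (hp : Odd p) (hm5 : 5 ≤ m) (hm : Odd m)
    (hk : 0 < k) (hgcd : Nat.gcd m k = 1)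
    (F : Type) [Field F] [Fintype F] [Algebra (ZMod p) F]
    (hF : Fintype.card F = p ^ m) :
    Nat.card {s : (Fin 2 → F) × (Fin 2 → ZMod p) //
      (∀ i, s.2 i ≠ 0) ∧
      ∑ i, algebraMap (ZMod p) F (s.2 i) * s.1 i ^ 2 = 0 ∧
      ∑ i, algebraMap (ZMod p) F (s.2 i) * s.1 i ^ (p ^ k + 1) = 0} =
    (p - 1) ^ 2 * p ^ m := by
  classical
  set A := algebraMap (ZMod p) F with hA
  have hAinj : Function.Injective A := (algebraMap (ZMod p) F).injective
  set S := {s : (Fin 2 → F) × (Fin 2 → ZMod p) //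
      (∀ i, s.2 i ≠ 0) ∧
      ∑ i, A (s.2 i) * s.1 i ^ 2 = 0 ∧
      ∑ i, A (s.2 i) * s.1 i ^ (p ^ k + 1) = 0} with hS
  -- the parametrizing type
  set T := ((ZMod p)ˣ × (ZMod p)ˣ) ⊕ ((ZMod p)ˣ × (ZMod p)ˣ × Fˣ) with hT
  have hd : ∀ t : (ZMod p)ˣ, (t : ZMod p) ^ (p ^ k + 1) = (t : ZMod p) ^ 2 := by
    intro t
    rw [pow_succ, ZMod.pow_card_pow, sq]
  -- the map
  have memInl : ∀ y₁ y₂ : (ZMod p)ˣ,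
      ((![(0:F), 0], ![(y₁ : ZMod p), y₂]) : (Fin 2 → F) × (Fin 2 → ZMod p)) ∈
        {s : (Fin 2 → F) × (Fin 2 → ZMod p) | (∀ i, s.2 i ≠ 0) ∧
          ∑ i, A (s.2 i) * s.1 i ^ 2 = 0 ∧
          ∑ i, A (s.2 i) * s.1 i ^ (p ^ k + 1) = 0} := by
    intro y₁ y₂
    refine ⟨?_, ?_, ?_⟩
    · intro i; fin_cases i <;> simp
    · simp [Fin.sum_univ_two, zero_pow]
    · simp [Fin.sum_univ_two, zero_pow]
  have memInr : ∀ (t y₂ : (ZMod p)ˣ) (x : Fˣ),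
      ((![(x : F), A t * x], ![-(t^2 * y₂ : (ZMod p)ˣ), y₂]) :
        (Fin 2 → F) × (Fin 2 → ZMod p)) ∈
        {s : (Fin 2 → F) × (Fin 2 → ZMod p) | (∀ i, s.2 i ≠ 0) ∧
          ∑ i, A (s.2 i) * s.1 i ^ 2 = 0 ∧
          ∑ i, A (s.2 i) * s.1 i ^ (p ^ k + 1) = 0} := by
    intro t y₂ x
    refine ⟨?_, ?_, ?_⟩
    · intro i; fin_cases i <;> simp
    · simp only [Fin.sum_univ_two, Matrix.cons_val_zero, Matrix.cons_val_one, Matrix.head_cons]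
      rw [mul_pow, ← map_pow]
      push_cast
      rw [map_neg, map_mul, map_pow]
      ring
    · simp only [Fin.sum_univ_two, Matrix.cons_val_zero, Matrix.cons_val_one, Matrix.head_cons]
      rw [mul_pow, ← map_pow, hd t]
      push_cast
      rw [map_neg, map_mul, map_pow]
      ring
  let f : T → S := Sum.elim
    (fun yy => ⟨(![(0:F), 0], ![(yy.1 : ZMod p), yy.2]), memInl yy.1 yy.2⟩)
    (fun v => ⟨(![(v.2.2 : F), A v.1 * v.2.2], ![-(v.1^2 * v.2.1 : (ZMod p)ˣ), v.2.1]),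
      memInr v.1 v.2.1 v.2.2⟩)
  have hbij : Function.Bijective f := by
    constructor
    · rintro (⟨y₁, y₂⟩ | ⟨t, y₂, x⟩) (⟨y₁', y₂'⟩ | ⟨t', y₂', x'⟩) h
      · have e1 := congrArg (fun s => s.val.2 0) h
        have e2 := congrArg (fun s => s.val.2 1) h
        simp only [f, Sum.elim_inl, Matrix.cons_val_zero, Matrix.cons_val_one,
          Matrix.head_cons] at e1 e2
        rw [Units.ext e1, Units.ext e2]
      · exfalso
        have e0 := congrArg (fun s => s.val.1 0) h
        simp only [f, Sum.elim_inl, Sum.elim_inr, Matrix.cons_val_zero] at e0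
        exact x'.ne_zero e0.symm
      · exfalso
        have e0 := congrArg (fun s => s.val.1 0) h
        simp only [f, Sum.elim_inl, Sum.elim_inr, Matrix.cons_val_zero] at e0
        exact x.ne_zero e0
      · have ex := congrArg (fun s => s.val.1 0) h
        have et := congrArg (fun s => s.val.1 1) h
        have ey := congrArg (fun s => s.val.2 1) h
        simp only [f, Sum.elim_inr, Matrix.cons_val_zero, Matrix.cons_val_one,
          Matrix.head_cons] at ex et ey
        rw [← ex] at et
        have ht : t = t' := Units.ext (hAinj (mul_right_cancel₀ x.ne_zero et))
        rw [Units.ext ex, ht, Units.ext ey]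
    · rintro ⟨⟨xv, yv⟩, hy, h1, h2⟩
      rw [Fin.sum_univ_two] at h1 h2
      dsimp only at h1 h2
      have hy0 := hy 0
      have hy1 := hy 1
      dsimp only at hy0 hy1
      have hA0 : A (yv 0) ≠ 0 := fun h => hy0 (hAinj (by rwa [map_zero]))
      have hA1 : A (yv 1) ≠ 0 := fun h => hy1 (hAinj (by rwa [map_zero]))
      by_cases hx1 : xv 0 = 0
      · -- then xv 1 = 0 as well
        have hx2 : xv 1 = 0 := by
          rw [hx1, zero_pow (by norm_num : (2:ℕ) ≠ 0), mul_zero, zero_add] at h1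
          rcases mul_eq_zero.mp h1 with h | h
          · exact absurd h hA1
          · exact pow_eq_zero_iff (by norm_num) |>.mp h
        refine ⟨Sum.inl (Units.mk0 _ hy0, Units.mk0 _ hy1), ?_⟩
        apply Subtype.ext
        simp only [f, Sum.elim_inl]
        refine Prod.ext ?_ ?_ <;> funext i <;> fin_cases i
        · simpa using hx1.symm
        · simpa using hx2.symm
        · simp
        · simp
      · -- x nonzero branch
        have hx2 : xv 1 ≠ 0 := by
          intro h
          rw [h, zero_pow (by norm_num : (2:ℕ) ≠ 0), mul_zero, add_zero] at h1
          rcases mul_eq_zero.mp h1 with h | h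
          · exact hA0 h
          · exact hx1 (pow_eq_zero_iff (by norm_num) |>.mp h)
        set x₁ := xv 0
        set x₂ := xv 1
        have e1 : A (yv 0) * x₁ ^ 2 = -(A (yv 1) * x₂ ^ 2) := by linear_combination h1
        have e2 : A (yv 0) * x₁ ^ (p ^ k + 1) = -(A (yv 1) * x₂ ^ (p ^ k + 1)) := by
          linear_combination h2
        have key : A (yv 0) * (x₁ ^ (p ^ k + 1) * x₂ ^ 2) =
            A (yv 0) * (x₁ ^ 2 * x₂ ^ (p ^ k + 1)) := by
          calc A (yv 0) * (x₁ ^ (p ^ k + 1) * x₂ ^ 2)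
              = (A (yv 0) * x₁ ^ (p ^ k + 1)) * x₂ ^ 2 := by ring
            _ = (-(A (yv 1) * x₂ ^ (p ^ k + 1))) * x₂ ^ 2 := by rw [e2]
            _ = (-(A (yv 1) * x₂ ^ 2)) * x₂ ^ (p ^ k + 1) := by ring
            _ = (A (yv 0) * x₁ ^ 2) * x₂ ^ (p ^ k + 1) := by rw [← e1]
            _ = _ := by ring
        have key2 : x₁ ^ (p ^ k + 1) * x₂ ^ 2 = x₁ ^ 2 * x₂ ^ (p ^ k + 1) :=
          mul_left_cancel₀ hA0 key
        set u : F := x₂ * x₁⁻¹ with hu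
        have hu0 : u ≠ 0 := mul_ne_zero hx2 (inv_ne_zero hx1)
        have key3 : x₁ ^ p ^ k * x₂ = x₁ * x₂ ^ p ^ k := by
          refine mul_right_cancel₀ (mul_ne_zero hx1 hx2) ?_
          linear_combination key2
        have hupk : u ^ p ^ k = u := by
          rw [hu, mul_pow, inv_pow]
          field_simp
          linear_combination (-(1:F)) * key3
        have hup : u ^ p = u := aux2 p m k hgcd F hF u hu0 hupk
        obtain ⟨a, ha⟩ := aux1 p F u hup
        have ha0 : a ≠ 0 := by
          intro h; rw [h, map_zero] at ha; exact hu0 ha.symm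
        have hx2eq : x₂ = A a * x₁ := by
          rw [ha, hu]; field_simp
        have hyeq : yv 0 = -(a ^ 2 * yv 1) := by
          apply hAinj
          have : A (yv 0) * x₁ ^ 2 = A (-(a ^ 2 * yv 1)) * x₁ ^ 2 := by
            rw [e1, hx2eq, map_neg, map_mul, map_pow]
            ring
          exact mul_right_cancel₀ (pow_ne_zero 2 hx1) this
        refine ⟨Sum.inr (Units.mk0 a ha0, Units.mk0 _ hy1, Units.mk0 _ hx1), ?_⟩
        apply Subtype.ext
        simp only [f, Sum.elim_inr]
        refine Prod.ext ?_ ?_ <;> funext i <;> fin_cases i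
        · simp; rfl
        · simpa using hx2eq.symm
        · simpa using hyeq.symm
        · simp
  have hcardT : Nat.card T = (p - 1) ^ 2 * p ^ m := by
    have hq : 1 ≤ p ^ m := Nat.one_le_pow _ _ (Fact.out : p.Prime).pos
    rw [hT, Nat.card_sum, Nat.card_prod, Nat.card_prod, Nat.card_prod]
    rw [Nat.card_eq_fintype_card (α := (ZMod p)ˣ), ZMod.card_units,
      Nat.card_eq_fintype_card (α := Fˣ), Fintype.card_units, hF]
    have : (p - 1) * (p - 1) + (p - 1) * ((p - 1) * (p ^ m - 1)) =
        (p - 1) * ((p - 1) * (1 + (p ^ m - 1))) := by ring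
    rw [this, Nat.add_sub_cancel' hq]
    ring
  rw [← hcardT]
  exact (Nat.card_eq_of_bijective f hbij).symm
end

section
/- The number of solutions (x₁,x₂,y₁,y₂) ∈ F² × (𝔽_p \ {0})² of the system y₁x₁² + y₂x₂² = 0, y₁x₁^{d₁} + y₂x₂^{d₁} = 0 and y₁x₁^{d₂} + y₂x₂^{d₂} = 0 is (p-1)²·p^m; in particular it equals the number of solutions of the system consisting of only the first two equations. -/
lemma aux_iter {M : Type*} [Monoid M] (t : M) (p k : ℕ) (h : t ^ p ^ k = t) :
    ∀ u, t ^ p ^ (k * u) = t := by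
  intro u
  induction u with
  | zero => simp
  | succ n ih =>
    have : p ^ (k * (n + 1)) = p ^ (k * n) * p ^ k := by ring
    rw [this, pow_mul, ih, h]


open Polynomial in
lemma aux_primefield (p : ℕ) [Fact p.Prime] (F : Type) [Field F] [Algebra (ZMod p) F]
    (t : F) (ht : t ^ p = t) : ∃ s : ZMod p, algebraMap (ZMod p) F s = t := by
  classical
  have hp1 : 1 < p := (Fact.out : p.Prime).one_lt
  set P : F[X] := X ^ p - X with hP
  have hPne : P ≠ 0 := FiniteField.X_pow_card_sub_X_ne_zero F hp1
  have hdeg : P.natDegree = p := FiniteField.X_pow_card_sub_X_natDegree_eq F hp1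
  have hroot : ∀ a : F, a ^ p = a → a ∈ P.roots.toFinset := by
    intro a ha
    rw [Multiset.mem_toFinset, mem_roots hPne]
    simp only [Multiset.mem_toFinset, mem_roots hPne, IsRoot.def, hP, eval_sub, eval_pow, eval_X]
    exact sub_eq_zero.mpr ha
  have hinj : Function.Injective (algebraMap (ZMod p) F) := (algebraMap (ZMod p) F).injective
  set S : Finset F := Finset.univ.image (algebraMap (ZMod p) F) with hS
  have hsub : S ⊆ P.roots.toFinset := by
    intro a ha
    simp only [hS, Finset.mem_image] at ha
    obtain ⟨s, -, rfl⟩ := ha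
    exact hroot _ (by rw [← map_pow, ZMod.pow_card])
  have hcardS : S.card = p := by
    rw [hS, Finset.card_image_of_injective _ hinj, Finset.card_univ, ZMod.card]
  have hcardR : P.roots.toFinset.card ≤ p := by
    calc P.roots.toFinset.card ≤ Multiset.card P.roots := P.roots.toFinset_card_le
    _ ≤ P.natDegree := P.card_roots'
    _ = p := hdeg
  have heq : P.roots.toFinset = S := (Finset.eq_of_subset_of_card_le hsub (hcardS ▸ hcardR)).symm
  have : t ∈ S := heq ▸ hroot t ht
  simpa [hS, Finset.mem_image, eq_comm] using this



lemma aux_fix {F : Type*} [Monoid F] (p m k : ℕ) (hm : 1 < m) (hgcd : Nat.gcd m k = 1)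
    (t : F) (hk : t ^ p ^ k = t) (hmfix : t ^ p ^ m = t) : t ^ p = t := by
  have hco : Nat.Coprime k m := Nat.coprime_comm.mp hgcd
  obtain ⟨u, -, hu⟩ := Nat.exists_mul_mod_eq_one_of_coprime hco hm
  have hdiv : k * u = m * (k * u / m) + 1 := by
    conv_lhs => rw [← Nat.div_add_mod (k * u) m, hu]
  have h1 : t ^ p ^ (k * u) = t := aux_iter t p k hk u
  rw [hdiv, pow_add, pow_one, pow_mul] at h1
  rwa [aux_iter t p m hmfix (k * u / m)] at h1

lemma aux_classify (p m k : ℕ) [Fact p.Prime] (hm5 : 5 ≤ m) (hgcd : Nat.gcd m k = 1)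
    (F : Type) [Field F] [Fintype F] [Algebra (ZMod p) F] (hF : Fintype.card F = p ^ m)
    (x : Fin 2 → F) (y : Fin 2 → ZMod p) (hy : ∀ i, y i ≠ 0)
    (h1 : algebraMap (ZMod p) F (y 0) * x 0 ^ 2 + algebraMap (ZMod p) F (y 1) * x 1 ^ 2 = 0)
    (h2 : algebraMap (ZMod p) F (y 0) * x 0 ^ (p ^ k + 1)
        + algebraMap (ZMod p) F (y 1) * x 1 ^ (p ^ k + 1) = 0) :
    (x 0 = 0 ∧ x 1 = 0) ∨
    (x 1 ≠ 0 ∧ ∃ w : ZMod p, w ≠ 0 ∧ x 0 = algebraMap (ZMod p) F w * x 1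
        ∧ y 1 = -(y 0 * w ^ 2)) := by
  have hinj : Function.Injective (algebraMap (ZMod p) F) := (algebraMap (ZMod p) F).injective
  have hy0 : algebraMap (ZMod p) F (y 0) ≠ 0 := fun h => hy 0 (hinj (by simpa using h))
  have hy1 : algebraMap (ZMod p) F (y 1) ≠ 0 := fun h => hy 1 (hinj (by simpa using h))
  by_cases hx1 : x 1 = 0
  · left
    refine ⟨?_, hx1⟩
    rw [hx1] at h1
    have h1' : algebraMap (ZMod p) F (y 0) * x 0 ^ 2 = 0 := by linear_combination h1
    rcases mul_eq_zero.mp h1' with h | h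
    · exact absurd h hy0
    · exact pow_eq_zero_iff two_ne_zero |>.mp h
  · right
    refine ⟨hx1, ?_⟩
    have hx0 : x 0 ≠ 0 := by
      intro h0
      rw [h0] at h1
      have h1' : algebraMap (ZMod p) F (y 1) * x 1 ^ 2 = 0 := by linear_combination h1
      rcases mul_eq_zero.mp h1' with h | h
      · exact hy1 h
      · exact hx1 (pow_eq_zero_iff two_ne_zero |>.mp h)
    set t : F := x 0 / x 1 with htdef
    have ht0 : t ≠ 0 := div_ne_zero hx0 hx1
    have htx : x 0 = t * x 1 := (div_mul_cancel₀ _ hx1).symm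
    -- from h1 : φ(y0) t² = -φ(y1)
    have e1 : algebraMap (ZMod p) F (y 0) * t ^ 2 = -algebraMap (ZMod p) F (y 1) := by
      have := h1
      rw [htx] at this
      have hx1sq : x 1 ^ 2 ≠ 0 := pow_ne_zero _ hx1
      have h' : x 1 ^ 2 * (algebraMap (ZMod p) F (y 0) * t ^ 2
          + algebraMap (ZMod p) F (y 1)) = 0 := by linear_combination this
      rcases mul_eq_zero.mp h' with h | h
      · exact absurd h hx1sq
      · linear_combination h
    have e2 : algebraMap (ZMod p) F (y 0) * t ^ (p ^ k + 1) = -algebraMap (ZMod p) F (y 1) := by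
      have := h2
      rw [htx] at this
      have hx1pow : x 1 ^ (p ^ k + 1) ≠ 0 := pow_ne_zero _ hx1
      have : (algebraMap (ZMod p) F (y 0) * t ^ (p ^ k + 1)
          + algebraMap (ZMod p) F (y 1)) * x 1 ^ (p ^ k + 1) = 0 := by
        rw [mul_pow] at this; linear_combination this
      rcases mul_eq_zero.mp this with h | h
      · linear_combination h
      · exact absurd h hx1pow
    have hteq : t ^ (p ^ k + 1) = t ^ 2 := by
      have := e1.trans e2.symm
      exact (mul_left_cancel₀ hy0 this).symm
    have htk : t ^ p ^ k = t := by
      have h' : t ^ p ^ k * t = t * t := by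
        rw [← pow_succ, hteq]; ring
      exact mul_right_cancel₀ ht0 h'
    have htm : t ^ p ^ m = t := by
      have := FiniteField.pow_card t
      rwa [hF] at this
    have htp : t ^ p = t := aux_fix p m k (by omega) hgcd t htk htm
    obtain ⟨w, hw⟩ := aux_primefield p F t htp
    refine ⟨w, ?_, ?_, ?_⟩
    · rintro rfl; rw [map_zero] at hw; exact ht0 hw.symm
    · rw [hw]; exact htx
    · apply hinj
      rw [map_neg, map_mul, map_pow, hw]
      linear_combination e1


section
variable (p : ℕ) [Fact p.Prime] (F : Type) [Field F] [Fintype F] [Algebra (ZMod p) F]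

/-- parametrization of the solution set -/
def solF : (ZMod p)ˣ × (ZMod p)ˣ × Option Fˣ → (Fin 2 → F) × (Fin 2 → ZMod p)
  | (u, w, none) => (![0, 0], ![(u : ZMod p), (w : ZMod p)])
  | (u, w, some z) => (![algebraMap (ZMod p) F (w : ZMod p) * (z : F), (z : F)],
      ![(u : ZMod p), -((u : ZMod p) * (w : ZMod p) ^ 2)])

lemma solF_mem (k : ℕ) (a : (ZMod p)ˣ × (ZMod p)ˣ × Option Fˣ) :
    (∀ i, (solF p F a).2 i ≠ 0) ∧
    ∑ i, algebraMap (ZMod p) F ((solF p F a).2 i) * (solF p F a).1 i ^ 2 = 0 ∧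
    ∑ i, algebraMap (ZMod p) F ((solF p F a).2 i) * (solF p F a).1 i ^ (p ^ k + 1) = 0 := by
  have hwpow : ∀ w : ZMod p, w ^ (p ^ k + 1) = w ^ 2 := fun w => by
    rw [pow_succ, ZMod.pow_card_pow, sq]
  obtain ⟨u, w, _ | z⟩ := a
  · refine ⟨?_, ?_, ?_⟩
    · intro i; fin_cases i <;> simp [solF]
    · simp [solF, Fin.sum_univ_two]
    · simp [solF, Fin.sum_univ_two]
  · refine ⟨?_, ?_, ?_⟩
    · intro i; fin_cases i <;>
        simp [solF, Units.ne_zero, mul_eq_zero, pow_eq_zero_iff]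
    · simp only [solF, Fin.sum_univ_two, Matrix.cons_val_zero, Matrix.cons_val_one,
        Matrix.head_cons, map_neg, map_mul, map_pow]
      ring
    · simp only [solF, Fin.sum_univ_two, Matrix.cons_val_zero, Matrix.cons_val_one,
        Matrix.head_cons, map_neg, map_mul, map_pow]
      rw [mul_pow, ← map_pow, hwpow, map_pow]
      ring

lemma solF_inj : Function.Injective (solF p F) := by
  have hinj : Function.Injective (algebraMap (ZMod p) F) := (algebraMap (ZMod p) F).injective
  rintro ⟨u, w, _ | z⟩ ⟨u', w', _ | z'⟩ h <;>
    simp only [solF, Prod.mk.injEq] at h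
  · obtain ⟨hx, hy⟩ := h
    have h0 := congrFun hy 0
    have h1 := congrFun hy 1
    simp only [Matrix.cons_val_zero, Matrix.cons_val_one, Matrix.head_cons] at h0 h1
    simp [Prod.ext_iff, Units.ext_iff, h0, h1]
  · exfalso
    have h1 := congrFun h.1 1
    simp only [Matrix.cons_val_one, Matrix.head_cons] at h1
    exact z'.ne_zero h1.symm
  · exfalso
    have h1 := congrFun h.1 1
    simp only [Matrix.cons_val_one, Matrix.head_cons] at h1
    exact z.ne_zero h1
  · obtain ⟨hx, hy⟩ := h
    have hx0 := congrFun hx 0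
    have hx1 := congrFun hx 1
    have hy0 := congrFun hy 0
    simp only [Matrix.cons_val_zero, Matrix.cons_val_one, Matrix.head_cons] at hx0 hx1 hy0
    have hz : z = z' := Units.ext hx1
    have hw : w = w' := by
      apply Units.ext; apply hinj
      have := hx0
      rw [hx1] at this
      exact mul_right_cancel₀ z'.ne_zero this
    simp [Prod.ext_iff, Units.ext_iff, hy0, hz, hw]

end

lemma solF_surj (p m k : ℕ) [Fact p.Prime] (hm5 : 5 ≤ m) (hgcd : Nat.gcd m k = 1)
    (F : Type) [Field F] [Fintype F] [Algebra (ZMod p) F] (hF : Fintype.card F = p ^ m)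
    (s : (Fin 2 → F) × (Fin 2 → ZMod p))
    (hy : ∀ i, s.2 i ≠ 0)
    (h1 : ∑ i, algebraMap (ZMod p) F (s.2 i) * s.1 i ^ 2 = 0)
    (h2 : ∑ i, algebraMap (ZMod p) F (s.2 i) * s.1 i ^ (p ^ k + 1) = 0) :
    ∃ a, solF p F a = s := by
  obtain ⟨x, y⟩ := s
  simp only [Fin.sum_univ_two] at h1 h2
  rcases aux_classify p m k hm5 hgcd F hF x y hy h1 h2 with ⟨hx0, hx1⟩ | ⟨hx1, w, hw0, hxw, hy1⟩
  · refine ⟨(Units.mk0 (y 0) (hy 0), Units.mk0 (y 1) (hy 1), none), ?_⟩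
    simp only [solF, Prod.mk.injEq, Units.val_mk0]
    constructor <;> funext i <;> fin_cases i <;> simp [hx0, hx1]
  · refine ⟨(Units.mk0 (y 0) (hy 0), Units.mk0 w hw0, some (Units.mk0 (x 1) hx1)), ?_⟩
    simp only [solF, Prod.mk.injEq, Units.val_mk0]
    constructor <;> funext i <;> fin_cases i <;> simp [hxw.symm, hy1.symm]

lemma aux_count (p m k : ℕ) [Fact p.Prime] (hm5 : 5 ≤ m) (hgcd : Nat.gcd m k = 1)
    (F : Type) [Field F] [Fintype F] [Algebra (ZMod p) F] (hF : Fintype.card F = p ^ m) :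
    Nat.card {s : (Fin 2 → F) × (Fin 2 → ZMod p) //
      (∀ i, s.2 i ≠ 0) ∧
      ∑ i, algebraMap (ZMod p) F (s.2 i) * s.1 i ^ 2 = 0 ∧
      ∑ i, algebraMap (ZMod p) F (s.2 i) * s.1 i ^ (p ^ k + 1) = 0} = (p - 1) ^ 2 * p ^ m := by
  classical
  let g : (ZMod p)ˣ × (ZMod p)ˣ × Option Fˣ → {s : (Fin 2 → F) × (Fin 2 → ZMod p) //
      (∀ i, s.2 i ≠ 0) ∧
      ∑ i, algebraMap (ZMod p) F (s.2 i) * s.1 i ^ 2 = 0 ∧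
      ∑ i, algebraMap (ZMod p) F (s.2 i) * s.1 i ^ (p ^ k + 1) = 0} :=
    fun a => ⟨solF p F a, solF_mem p F k a⟩
  have hbij : Function.Bijective g := by
    constructor
    · intro a b hab
      exact solF_inj p F (congrArg Subtype.val hab)
    · rintro ⟨s, hy, h1, h2⟩
      obtain ⟨a, ha⟩ := solF_surj p m k hm5 hgcd F hF s hy h1 h2
      exact ⟨a, Subtype.ext ha⟩
  have hcard := (Nat.card_eq_of_bijective g hbij).symm
  rw [hcard, Nat.card_prod, Nat.card_prod]
  simp only [Nat.card_eq_fintype_card]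
  rw [ZMod.card_units, Fintype.card_option, Fintype.card_units, hF]
  have hpm : 1 ≤ p ^ m := Nat.one_le_pow _ _ (Fact.out : p.Prime).pos
  have : p ^ m - 1 + 1 = p ^ m := Nat.sub_add_cancel hpm
  rw [this]
  ring


set_option linter.unusedSectionVars false

/-- Remark after Lemma 3.2: the number of solutions `(x₁,x₂,y₁,y₂) ∈ F² × (𝔽_p*)²`
of the three equations `y₁x₁² + y₂x₂² = 0`, `y₁x₁^{d₁} + y₂x₂^{d₁} = 0` and
`y₁x₁^{d₂} + y₂x₂^{d₂} = 0` (`d₁ = p^k+1`, `d₂ = p^{2k}+1`) is `(p-1)²·p^m`;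
in particular it equals the number of solutions of the first two equations only. -/
theorem stmt_4 (p m k : ℕ) [Fact p.Prime] (hp : Odd p) (hm5 : 5 ≤ m) (hm : Odd m)
    (hk : 0 < k) (hgcd : Nat.gcd m k = 1)
    (F : Type) [Field F] [Fintype F] [Algebra (ZMod p) F]
    (hF : Fintype.card F = p ^ m) :
    Nat.card {s : (Fin 2 → F) × (Fin 2 → ZMod p) //
      (∀ i, s.2 i ≠ 0) ∧
      ∑ i, algebraMap (ZMod p) F (s.2 i) * s.1 i ^ 2 = 0 ∧
      ∑ i, algebraMap (ZMod p) F (s.2 i) * s.1 i ^ (p ^ k + 1) = 0 ∧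
      ∑ i, algebraMap (ZMod p) F (s.2 i) * s.1 i ^ (p ^ (2 * k) + 1) = 0} =
    (p - 1) ^ 2 * p ^ m ∧
    Nat.card {s : (Fin 2 → F) × (Fin 2 → ZMod p) //
      (∀ i, s.2 i ≠ 0) ∧
      ∑ i, algebraMap (ZMod p) F (s.2 i) * s.1 i ^ 2 = 0 ∧
      ∑ i, algebraMap (ZMod p) F (s.2 i) * s.1 i ^ (p ^ k + 1) = 0 ∧
      ∑ i, algebraMap (ZMod p) F (s.2 i) * s.1 i ^ (p ^ (2 * k) + 1) = 0} =
    Nat.card {s : (Fin 2 → F) × (Fin 2 → ZMod p) //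
      (∀ i, s.2 i ≠ 0) ∧
      ∑ i, algebraMap (ZMod p) F (s.2 i) * s.1 i ^ 2 = 0 ∧
      ∑ i, algebraMap (ZMod p) F (s.2 i) * s.1 i ^ (p ^ k + 1) = 0} := by
  have hiff : ∀ s : (Fin 2 → F) × (Fin 2 → ZMod p),
      ((∀ i, s.2 i ≠ 0) ∧
      ∑ i, algebraMap (ZMod p) F (s.2 i) * s.1 i ^ 2 = 0 ∧
      ∑ i, algebraMap (ZMod p) F (s.2 i) * s.1 i ^ (p ^ k + 1) = 0 ∧
      ∑ i, algebraMap (ZMod p) F (s.2 i) * s.1 i ^ (p ^ (2 * k) + 1) = 0) ↔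
      ((∀ i, s.2 i ≠ 0) ∧
      ∑ i, algebraMap (ZMod p) F (s.2 i) * s.1 i ^ 2 = 0 ∧
      ∑ i, algebraMap (ZMod p) F (s.2 i) * s.1 i ^ (p ^ k + 1) = 0) := by
    rintro ⟨x, y⟩
    constructor
    · rintro ⟨hy, h1, h2, -⟩
      exact ⟨hy, h1, h2⟩
    · rintro ⟨hy, h1, h2⟩
      refine ⟨hy, h1, h2, ?_⟩
      simp only [Fin.sum_univ_two] at h1 h2 ⊢
      rcases aux_classify p m k hm5 hgcd F hF x y hy h1 h2 with
        ⟨hx0, hx1⟩ | ⟨hx1, w, hw0, hxw, hy1⟩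
      · rw [hx0, hx1, zero_pow (by positivity)]; ring
      · have hwpow : w ^ (p ^ (2 * k) + 1) = w ^ 2 := by
          rw [pow_succ, ZMod.pow_card_pow, sq]
        rw [hxw, hy1, map_neg, map_mul, map_pow, mul_pow, ← map_pow, hwpow, map_pow]
        ring
  have e := Nat.card_congr (Equiv.subtypeEquivRight hiff)
  exact ⟨e.trans (aux_count p m k hm5 hgcd F hF), e⟩
end

section
/- The number of solutions (x₁,x₂,x₃,y₁,y₂,y₃) ∈ F³ × (𝔽_p \ {0})³ of the system y₁x₁² + y₂x₂² + y₃x₃² = 0 and y₁x₁^{d₁} + y₂x₂^{d₁} + y₃x₃^{d₁} = 0 is (p-1)³·(p^{m+1} + p^m − p). -/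
open Finset

section CharSum

variable {p : ℕ} [Fact p.Prime]

private lemma ringChar_zmod_ne_two (hp2 : p ≠ 2) : ringChar (ZMod p) ≠ 2 := by
  rw [ZMod.ringChar_zmod_n]; exact hp2

private lemma sum_ite_sq (hp2 : p ≠ 2) (b c : ZMod p) (hb : b ≠ 0) :
    (∑ v : ZMod p, if b * v ^ 2 = c then (1 : ℤ) else 0)
      = quadraticChar (ZMod p) (b⁻¹ * c) + 1 := by
  classical
  have h := quadraticChar_card_sqrts (ringChar_zmod_ne_two hp2) (b⁻¹ * c)
  rw [Set.toFinset_setOf] at h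
  rw [Finset.sum_boole, ← h]
  congr 2
  apply Finset.filter_congr
  intro v _
  constructor
  · intro hv
    rw [← hv]; field_simp
  · intro hv
    rw [hv]; field_simp

private lemma sum_char_mul_shift (hp2 : p ≠ 2) (w : ZMod p) (hw : w ≠ 0) :
    ∑ s : ZMod p, quadraticChar (ZMod p) (s * (s + w)) = -1 := by
  classical
  have h0 : ∑ s : ZMod p, quadraticChar (ZMod p) (s * (s + w))
      = ∑ s ∈ (univ : Finset (ZMod p)) \ {0}, quadraticChar (ZMod p) (s * (s + w)) := by
    rw [Finset.sum_sdiff_eq_sub (Finset.subset_univ _)]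
    simp
  rw [h0]
  have h1 : ∑ s ∈ (univ : Finset (ZMod p)) \ {0}, quadraticChar (ZMod p) (s * (s + w))
      = ∑ t ∈ (univ : Finset (ZMod p)) \ {1}, quadraticChar (ZMod p) t := by
    apply Finset.sum_nbij' (fun s => 1 + w * s⁻¹) (fun t => w * (t - 1)⁻¹)
    · intro s hs
      simp only [Finset.mem_sdiff, Finset.mem_univ, Finset.mem_singleton, true_and] at hs ⊢
      intro hc
      have h2 : w * s⁻¹ = 0 := by linear_combination hc
      exact (mul_ne_zero hw (inv_ne_zero hs)) h2
    · intro t ht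
      simp only [Finset.mem_sdiff, Finset.mem_univ, Finset.mem_singleton, true_and] at ht ⊢
      exact mul_ne_zero hw (inv_ne_zero (sub_ne_zero.mpr ht))
    · intro s hs
      simp only [Finset.mem_sdiff, Finset.mem_univ, Finset.mem_singleton, true_and] at hs
      field_simp
      rw [add_sub_cancel_left, div_self hw]
    · intro t ht
      simp only [Finset.mem_sdiff, Finset.mem_univ, Finset.mem_singleton, true_and] at ht
      have h1 : t - 1 ≠ 0 := sub_ne_zero.mpr ht
      field_simp
      ring
    · intro s hs
      simp only [Finset.mem_sdiff, Finset.mem_univ, Finset.mem_singleton, true_and] at hs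
      have : s * (s + w) = s ^ 2 * (1 + w * s⁻¹) := by
        field_simp
      rw [this, map_mul, quadraticChar_sq_one' hs, one_mul]
  rw [h1]
  rw [Finset.sum_sdiff_eq_sub (Finset.subset_univ _), quadraticChar_sum_zero (ringChar_zmod_ne_two hp2)]
  simp

private lemma sum_char_sq_add (hp2 : p ≠ 2) (w : ZMod p) (hw : w ≠ 0) :
    ∑ u : ZMod p, quadraticChar (ZMod p) (u ^ 2 + w) = -1 := by
  classical
  have hfib : ∑ u : ZMod p, quadraticChar (ZMod p) (u ^ 2 + w)
      = ∑ s : ZMod p, ∑ u ∈ univ.filter (fun u : ZMod p => u ^ 2 = s),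
          quadraticChar (ZMod p) (u ^ 2 + w) :=
    (Finset.sum_fiberwise_of_maps_to (fun u _ => Finset.mem_univ (u ^ 2)) _).symm
  rw [hfib]
  have hinner : ∀ s : ZMod p, ∑ u ∈ univ.filter (fun u : ZMod p => u ^ 2 = s),
      quadraticChar (ZMod p) (u ^ 2 + w)
      = (quadraticChar (ZMod p) s + 1) * quadraticChar (ZMod p) (s + w) := by
    intro s
    have hcard := quadraticChar_card_sqrts (ringChar_zmod_ne_two hp2) s
    rw [Set.toFinset_setOf] at hcard
    calc ∑ u ∈ univ.filter (fun u : ZMod p => u ^ 2 = s), quadraticChar (ZMod p) (u ^ 2 + w)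
        = ∑ u ∈ univ.filter (fun u : ZMod p => u ^ 2 = s), quadraticChar (ZMod p) (s + w) := by
          apply Finset.sum_congr rfl
          intro u hu
          rw [Finset.mem_filter] at hu
          rw [hu.2]
      _ = ((univ.filter (fun u : ZMod p => u ^ 2 = s)).card : ℤ) * quadraticChar (ZMod p) (s + w) := by
          rw [Finset.sum_const, nsmul_eq_mul]
      _ = (quadraticChar (ZMod p) s + 1) * quadraticChar (ZMod p) (s + w) := by rw [hcard]
  rw [Finset.sum_congr rfl (fun s _ => hinner s)]
  have hexp : ∑ s : ZMod p, (quadraticChar (ZMod p) s + 1) * quadraticChar (ZMod p) (s + w)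
      = ∑ s : ZMod p, quadraticChar (ZMod p) (s * (s + w))
        + ∑ s : ZMod p, quadraticChar (ZMod p) (s + w) := by
    rw [← Finset.sum_add_distrib]
    apply Finset.sum_congr rfl
    intro s _
    rw [map_mul]; ring
  rw [hexp, sum_char_mul_shift hp2 w hw]
  have hshift : ∑ s : ZMod p, quadraticChar (ZMod p) (s + w)
      = ∑ t : ZMod p, quadraticChar (ZMod p) t := by
    apply Fintype.sum_equiv (Equiv.addRight w)
    intro s
    rfl
  rw [hshift, quadraticChar_sum_zero (ringChar_zmod_ne_two hp2)]
  ring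

private lemma sum_char_B (hp2 : p ≠ 2) (B w : ZMod p) (hB : B ≠ 0) :
    ∑ v : ZMod p, quadraticChar (ZMod p) (B * v ^ 2 + w)
      = quadraticChar (ZMod p) B * (if w = 0 then ((p : ℤ) - 1) else -1) := by
  classical
  have hfac : ∀ v : ZMod p, B * v ^ 2 + w = B * (v ^ 2 + B⁻¹ * w) := by
    intro v; rw [mul_add, ← mul_assoc, mul_inv_cancel₀ hB, one_mul]
  have h1 : ∑ v : ZMod p, quadraticChar (ZMod p) (B * v ^ 2 + w)
      = quadraticChar (ZMod p) B * ∑ v : ZMod p, quadraticChar (ZMod p) (v ^ 2 + B⁻¹ * w) := by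
    rw [Finset.mul_sum]
    apply Finset.sum_congr rfl
    intro v _
    rw [hfac v, map_mul]
  rw [h1]
  by_cases hw : w = 0
  · subst hw
    rw [if_pos rfl]
    congr 1
    have : ∀ v : ZMod p, quadraticChar (ZMod p) (v ^ 2 + B⁻¹ * 0)
        = if v = 0 then 0 else 1 := by
      intro v
      rw [mul_zero, add_zero]
      by_cases hv : v = 0
      · simp [hv]
      · rw [if_neg hv]; exact quadraticChar_sq_one' hv
    rw [Finset.sum_congr rfl (fun v _ => this v)]
    have h2 : ∀ v : ZMod p, (if v = 0 then (0 : ℤ) else 1) = 1 - (if v = 0 then 1 else 0) := by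
      intro v; by_cases hv : v = 0 <;> simp [hv]
    rw [Finset.sum_congr rfl (fun v _ => h2 v), Finset.sum_sub_distrib, Finset.sum_const,
      Finset.sum_ite_eq' univ (0 : ZMod p) (fun _ => (1 : ℤ)), Finset.card_univ, ZMod.card]
    simp
  · rw [if_neg hw]
    congr 1
    exact sum_char_sq_add hp2 _ (mul_ne_zero (inv_ne_zero hB) hw)

private lemma sum_char_AB (hp2 : p ≠ 2) (A B : ZMod p) (hA : A ≠ 0) (hB : B ≠ 0) :
    ∑ a : ZMod p, ∑ b : ZMod p, quadraticChar (ZMod p) (A * a ^ 2 + B * b ^ 2) = 0 := by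
  classical
  have h1 : ∀ a : ZMod p, ∑ b : ZMod p, quadraticChar (ZMod p) (A * a ^ 2 + B * b ^ 2)
      = quadraticChar (ZMod p) B * (if a = 0 then ((p : ℤ) - 1) else -1) := by
    intro a
    have : ∀ b : ZMod p, A * a ^ 2 + B * b ^ 2 = B * b ^ 2 + A * a ^ 2 := fun b => by ring
    rw [Finset.sum_congr rfl (fun b _ => by rw [this b])]
    rw [sum_char_B hp2 B (A * a ^ 2) hB]
    congr 1
    by_cases ha : a = 0
    · simp [ha]
    · rw [if_neg ha, if_neg (by exact mul_ne_zero hA (pow_ne_zero 2 ha))]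
  rw [Finset.sum_congr rfl (fun a _ => h1 a)]
  rw [← Finset.mul_sum]
  have : ∑ a : ZMod p, (if a = 0 then ((p : ℤ) - 1) else -1)
      = ∑ a : ZMod p, ((if a = 0 then (p : ℤ) else 0) + (-1)) := by
    apply Finset.sum_congr rfl
    intro a _
    by_cases ha : a = 0
    · simp [ha]; ring
    · simp [ha]
  rw [this, Finset.sum_add_distrib, Finset.sum_ite_eq' univ (0 : ZMod p) (fun _ => (p : ℤ))]
  simp [ZMod.card]

private lemma conic_count (hp2 : p ≠ 2) (y0 y1 y2 : ZMod p)
    (h0 : y0 ≠ 0) (h1 : y1 ≠ 0) (h2 : y2 ≠ 0) :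
    ((univ : Finset ((ZMod p) × (ZMod p) × (ZMod p))).filter
      (fun z => y0 * z.1 ^ 2 + y1 * z.2.1 ^ 2 + y2 * z.2.2 ^ 2 = 0)).card = p ^ 2 := by
  classical
  have key : (((univ : Finset ((ZMod p) × (ZMod p) × (ZMod p))).filter
      (fun z => y0 * z.1 ^ 2 + y1 * z.2.1 ^ 2 + y2 * z.2.2 ^ 2 = 0)).card : ℤ) = (p : ℤ) ^ 2 := by
    rw [← Finset.sum_boole]
    rw [Fintype.sum_prod_type]
    have hstep : ∀ a : ZMod p, (∑ z : (ZMod p) × (ZMod p),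
        if y0 * a ^ 2 + y1 * z.1 ^ 2 + y2 * z.2 ^ 2 = 0 then (1 : ℤ) else 0)
        = ∑ b : ZMod p,
            (quadraticChar (ZMod p) ((-y2⁻¹ * y0) * a ^ 2 + (-y2⁻¹ * y1) * b ^ 2) + 1) := by
      intro a
      rw [Fintype.sum_prod_type]
      apply Finset.sum_congr rfl
      intro b _
      have hcond : ∀ c : ZMod p,
          (y0 * a ^ 2 + y1 * b ^ 2 + y2 * c ^ 2 = 0) ↔ (y2 * c ^ 2 = -(y0 * a ^ 2 + y1 * b ^ 2)) := by
        intro c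
        constructor
        · intro h; linear_combination h
        · intro h; linear_combination h
      calc (∑ c : ZMod p, if y0 * a ^ 2 + y1 * b ^ 2 + y2 * c ^ 2 = 0 then (1 : ℤ) else 0)
          = ∑ c : ZMod p, if y2 * c ^ 2 = -(y0 * a ^ 2 + y1 * b ^ 2) then (1 : ℤ) else 0 := by
            apply Finset.sum_congr rfl
            intro c _
            rw [if_congr (hcond c) rfl rfl]
        _ = quadraticChar (ZMod p) (y2⁻¹ * -(y0 * a ^ 2 + y1 * b ^ 2)) + 1 :=
            sum_ite_sq hp2 y2 _ h2
        _ = quadraticChar (ZMod p) ((-y2⁻¹ * y0) * a ^ 2 + (-y2⁻¹ * y1) * b ^ 2) + 1 := by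
            congr 1
            ring
    rw [Finset.sum_congr rfl (fun a _ => hstep a)]
    have : ∑ a : ZMod p, ∑ b : ZMod p,
        (quadraticChar (ZMod p) ((-y2⁻¹ * y0) * a ^ 2 + (-y2⁻¹ * y1) * b ^ 2) + 1)
        = (∑ a : ZMod p, ∑ b : ZMod p,
            quadraticChar (ZMod p) ((-y2⁻¹ * y0) * a ^ 2 + (-y2⁻¹ * y1) * b ^ 2))
          + (p : ℤ) * (p : ℤ) := by
      rw [Finset.sum_congr rfl (fun a (_ : a ∈ univ) => Finset.sum_add_distrib)]
      rw [Finset.sum_add_distrib]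
      congr 1
      have hone : ∀ a : ZMod p, ∑ _b : ZMod p, (1 : ℤ) = (p : ℤ) := by
        intro a
        rw [Finset.sum_const, Finset.card_univ, ZMod.card, nsmul_eq_mul, mul_one]
      rw [Finset.sum_congr rfl (fun a _ => hone a), Finset.sum_const, Finset.card_univ,
        ZMod.card, nsmul_eq_mul]
    rw [this, sum_char_AB hp2 _ _ (mul_ne_zero (neg_ne_zero.mpr (inv_ne_zero h2)) h0)
      (mul_ne_zero (neg_ne_zero.mpr (inv_ne_zero h2)) h1)]
    ring
  have := key
  exact_mod_cast this

end CharSum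

section Geometry

variable {F : Type} [Field F]

private lemma no_isotropic_plane (a u v : Fin 3 → F) (ha : ∀ i, a i ≠ 0)
    (huu : ∑ i, a i * (u i * u i) = 0) (hvv : ∑ i, a i * (v i * v i) = 0)
    (huv : ∑ i, a i * (u i * v i) = 0) : ¬ LinearIndependent F ![u, v] := by
  classical
  intro hind
  set B : LinearMap.BilinForm F (Fin 3 → F) :=
    LinearMap.mk₂ F (fun x z => ∑ i, a i * (x i * z i))
      (fun m₁ m₂ n => by
        rw [← Finset.sum_add_distrib]
        exact Finset.sum_congr rfl fun i _ => by simp only [Pi.add_apply]; ring)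
      (fun c m n => by
        rw [smul_eq_mul, Finset.mul_sum]
        exact Finset.sum_congr rfl fun i _ => by simp only [Pi.smul_apply, smul_eq_mul]; ring)
      (fun m n₁ n₂ => by
        rw [← Finset.sum_add_distrib]
        exact Finset.sum_congr rfl fun i _ => by simp only [Pi.add_apply]; ring)
      (fun c m n => by
        rw [smul_eq_mul, Finset.mul_sum]
        exact Finset.sum_congr rfl fun i _ => by simp only [Pi.smul_apply, smul_eq_mul]; ring)
    with hBdef
  have hBapp : ∀ x z : Fin 3 → F, B x z = ∑ i, a i * (x i * z i) := fun x z => rfl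
  have hsymm : ∀ x z : Fin 3 → F, B x z = B z x := by
    intro x z
    rw [hBapp, hBapp]
    exact Finset.sum_congr rfl fun i _ => by ring
  have hrefl : B.IsRefl := by
    intro x z h
    rw [hsymm] at h
    exact h
  have hB : B.Nondegenerate := by
    refine (LinearMap.IsRefl.nondegenerate_iff_separatingLeft hrefl).mpr ?_
    intro x hx
    funext i
    have h := hx (fun j => if j = i then (1 : F) else 0)
    rw [hBapp] at h
    have hsum : ∑ j, a j * (x j * if j = i then (1 : F) else 0) = a i * x i := by
      rw [Finset.sum_eq_single i]
      · rw [if_pos rfl, mul_one]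
      · intro j _ hji
        rw [if_neg hji, mul_zero, mul_zero]
      · intro h'; exact absurd (Finset.mem_univ i) h'
    rw [hsum] at h
    exact (mul_eq_zero.mp h).resolve_left (ha i)
  set W := Submodule.span F (Set.range ![u, v]) with hW
  have hWrank : Module.finrank F W = 2 := by
    rw [finrank_span_eq_card hind]
    simp
  have hrange : ∀ w : Fin 3 → F, w ∈ Set.range ![u, v] → w = u ∨ w = v := by
    intro w hw
    obtain ⟨i, rfl⟩ := hw
    fin_cases i
    · left; rfl
    · right; rfl
  have hBvals : ∀ x z : Fin 3 → F, (x = u ∨ x = v) → (z = u ∨ z = v) → B x z = 0 := by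
    rintro x z (rfl | rfl) (rfl | rfl) <;> rw [hBapp]
    · exact huu
    · exact huv
    · rw [show ∑ i, a i * (x i * z i) = ∑ i, a i * (z i * x i) from
        Finset.sum_congr rfl fun i _ => by ring]
      exact huv
    · exact hvv
  have hle : W ≤ B.orthogonal W := by
    rw [hW, Submodule.span_le]
    intro x hx
    rw [SetLike.mem_coe, LinearMap.BilinForm.mem_orthogonal_iff]
    intro n hn
    induction hn using Submodule.span_induction with
    | mem y hy =>
        exact hBvals y x (hrange y hy) (hrange x hx)
    | zero => exact LinearMap.BilinForm.zero_left _
    | add x y hx hy ihx ihy =>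
        show B (x + y) _ = 0
        rw [LinearMap.BilinForm.add_left, ihx, ihy, add_zero]
    | smul c x hx ih =>
        show B (c • x) _ = 0
        rw [LinearMap.BilinForm.smul_left, ih, mul_zero]
  have h3 : Module.finrank F (Fin 3 → F) = 3 := by
    rw [Module.finrank_pi]
    simp
  have hmono := Submodule.finrank_mono hle
  rw [LinearMap.BilinForm.finrank_orthogonal hB W, h3, hWrank] at hmono
  omega

end Geometry

section FixedField

private lemma mem_prime_field {p m k : ℕ} [Fact p.Prime] {F : Type} [Field F] [Fintype F]
    [Algebra (ZMod p) F] (hF : Fintype.card F = p ^ m) (hm : 1 < m) (hgcd : Nat.gcd m k = 1)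
    (u : F) (hu : u ^ p ^ k = u) : ∃ z : ZMod p, algebraMap (ZMod p) F z = u := by
  classical
  have hp2 : 1 < p := (Fact.out : p.Prime).one_lt
  -- Step 1 : u ^ p = u
  have hks : ∀ s : ℕ, u ^ p ^ (k * s) = u := by
    intro s
    induction s with
    | zero => simp
    | succ s ih =>
        have : p ^ (k * (s + 1)) = p ^ (k * s) * p ^ k := by
          rw [← pow_add]; ring_nf
        rw [this, pow_mul, ih, hu]
  have hq : u ^ p ^ m = u := by rw [← hF]; exact FiniteField.pow_card u
  have hmt : ∀ t : ℕ, u ^ p ^ (m * t) = u := by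
    intro t
    induction t with
    | zero => simp
    | succ t ih =>
        have : p ^ (m * (t + 1)) = p ^ (m * t) * p ^ m := by
          rw [← pow_add]; ring_nf
        rw [this, pow_mul, ih, hq]
  obtain ⟨s, -, hs⟩ := Nat.exists_mul_mod_eq_one_of_coprime (Nat.Coprime.symm hgcd) hm
  -- hs : k * s % m = 1
  have hdecomp : k * s = m * (k * s / m) + 1 := by
    conv_lhs => rw [← Nat.div_add_mod (k * s) m]
    rw [hs]
  have hup : u ^ p = u := by
    have h1 : u ^ p ^ (k * s) = u := hks s
    rw [hdecomp, pow_succ, pow_mul] at h1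
    rw [hmt (k * s / m)] at h1
    exact h1
  -- Step 2 : u lies in the image of ZMod p
  by_contra hcon
  push_neg at hcon
  set ι := algebraMap (ZMod p) F with hι
  set S : Finset F := Finset.univ.image ι with hS
  have hinj : Function.Injective ι := (algebraMap (ZMod p) F).injective
  have hcardS : S.card = p := by
    rw [hS, Finset.card_image_of_injective _ hinj, Finset.card_univ, ZMod.card]
  have huS : u ∉ S := by
    rw [hS]
    simp only [Finset.mem_image, Finset.mem_univ, true_and, not_exists]
    exact hcon
  set f : Polynomial F := Polynomial.X ^ p - Polynomial.X with hf
  have hdeg : f.natDegree = p := FiniteField.X_pow_card_sub_X_natDegree_eq F hp2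
  have hf0 : f ≠ 0 := by
    intro h0
    rw [h0, Polynomial.natDegree_zero] at hdeg
    omega
  have hroots : insert u S ⊆ f.roots.toFinset := by
    intro x hx
    rw [Multiset.mem_toFinset, Polynomial.mem_roots hf0]
    have hxpx : x ^ p = x := by
      rcases Finset.mem_insert.mp hx with rfl | hxS
      · exact hup
      · rw [hS] at hxS
        obtain ⟨z, _, rfl⟩ := Finset.mem_image.mp hxS
        rw [← map_pow, ZMod.pow_card]
    rw [Polynomial.IsRoot, hf]
    simp [sub_eq_zero, hxpx]
  have hcard2 : (insert u S).card = p + 1 := by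
    rw [Finset.card_insert_of_notMem huS, hcardS]
  have hle2 : (insert u S).card ≤ p := by
    calc (insert u S).card ≤ f.roots.toFinset.card := Finset.card_le_card hroots
      _ ≤ Multiset.card f.roots := Multiset.toFinset_card_le _
      _ ≤ f.natDegree := Polynomial.card_roots' f
      _ = p := hdeg
  omega

end FixedField

section Counting

open Finset

private lemma conic_count_fin {p : ℕ} [Fact p.Prime] (hp2 : p ≠ 2) (y : Fin 3 → ZMod p)
    (hy : ∀ i, y i ≠ 0) :
    ((univ : Finset (Fin 3 → ZMod p)).filter (fun z => ∑ i, y i * z i ^ 2 = 0)).card = p ^ 2 := by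
  classical
  rw [← conic_count hp2 (y 0) (y 1) (y 2) (hy 0) (hy 1) (hy 2)]
  apply Finset.card_nbij' (fun z => (z 0, z 1, z 2)) (fun w => ![w.1, w.2.1, w.2.2])
  · intro z hz
    rw [Finset.mem_coe, Finset.mem_filter] at hz ⊢
    refine ⟨Finset.mem_univ _, ?_⟩
    have h := hz.2
    rw [Fin.sum_univ_three] at h
    exact h
  · intro w hw
    rw [Finset.mem_coe, Finset.mem_filter] at hw ⊢
    refine ⟨Finset.mem_univ _, ?_⟩
    rw [Fin.sum_univ_three]
    simpa using hw.2
  · intro z _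
    funext i
    fin_cases i <;> simp
  · intro w _
    simp

private lemma sol_count {p m k : ℕ} [Fact p.Prime] (hp2 : p ≠ 2) (hm : 1 < m)
    (hgcd : Nat.gcd m k = 1) {F : Type} [Field F] [Fintype F] [Algebra (ZMod p) F]
    (hF : Fintype.card F = p ^ m) (y : Fin 3 → ZMod p) (hy : ∀ i, y i ≠ 0)
    (S : Finset (Fin 3 → F))
    (hmemS : ∀ x : Fin 3 → F, x ∈ S ↔
      (∑ i, algebraMap (ZMod p) F (y i) * x i ^ 2 = 0 ∧
       ∑ i, algebraMap (ZMod p) F (y i) * x i ^ (p ^ k + 1) = 0)) :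
    S.card = 1 + (p ^ m - 1) * (p + 1) := by
  classical
  set ι := algebraMap (ZMod p) F with hι
  have hinj : Function.Injective ι := (algebraMap (ZMod p) F).injective
  haveI : CharP F p := charP_of_injective_algebraMap hinj p
  haveI : ExpChar F p := ExpChar.prime Fact.out
  have hppos : 2 ≤ p := (Fact.out : p.Prime).two_le
  have hzp' : ∀ (n : ℕ) (w : ZMod p), w ^ p ^ n = w := by
    intro n
    induction n with
    | zero => simp
    | succ n ih => intro w; rw [pow_succ, pow_mul, ih, ZMod.pow_card]
  have hzp : ∀ w : ZMod p, w ^ p ^ k = w := hzp' k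
  have hιfix : ∀ w : ZMod p, (ι w) ^ p ^ k = ι w := by
    intro w
    rw [← map_pow, hzp]
  have hιne : ∀ i, ι (y i) ≠ 0 := fun i => (map_ne_zero ι).mpr (hy i)
  set Sol := (univ : Finset (Fin 3 → F)).filter (fun x =>
      ∑ i, ι (y i) * x i ^ 2 = 0 ∧ ∑ i, ι (y i) * x i ^ (p ^ k + 1) = 0) with hSol
  have hSeq : S = Sol := by
    ext x
    rw [hSol, Finset.mem_filter, hmemS x]
    simp only [Finset.mem_univ, true_and]
  rw [hSeq]
  -- representation of nonzero solutions
  have main_repr : ∀ x : Fin 3 → F, (∑ i, ι (y i) * x i ^ 2 = 0) →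
      (∑ i, ι (y i) * x i ^ (p ^ k + 1) = 0) → ∀ j, x j ≠ 0 →
      ∃ z : Fin 3 → ZMod p, z j = 1 ∧ (∑ i, y i * z i ^ 2 = 0) ∧ ∀ i, x i = x j * ι (z i) := by
    intro x hx1 hx2 j hxj
    have hfrob : ∑ i, ι (y i) * ((x i ^ p ^ k) * (x i ^ p ^ k)) = 0 := by
      have h := congrArg (iterateFrobenius F p k) hx1
      rw [map_sum, map_zero] at h
      calc ∑ i, ι (y i) * ((x i ^ p ^ k) * (x i ^ p ^ k))
          = ∑ i, iterateFrobenius F p k (ι (y i) * x i ^ 2) := by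
            apply Finset.sum_congr rfl
            intro i _
            rw [map_mul, map_pow, iterateFrobenius_def, iterateFrobenius_def, hιfix]
            ring
        _ = 0 := h
    have hcross : ∑ i, ι (y i) * ((x i ^ p ^ k) * x i) = 0 := by
      calc ∑ i, ι (y i) * ((x i ^ p ^ k) * x i)
          = ∑ i, ι (y i) * x i ^ (p ^ k + 1) := by
            apply Finset.sum_congr rfl
            intro i _
            rw [pow_succ]
        _ = 0 := hx2
    have hself : ∑ i, ι (y i) * (x i * x i) = 0 := by
      calc ∑ i, ι (y i) * (x i * x i) = ∑ i, ι (y i) * x i ^ 2 := by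
            apply Finset.sum_congr rfl
            intro i _
            rw [pow_two]
        _ = 0 := hx1
    have hnind := no_isotropic_plane (fun i => ι (y i)) (fun i => x i ^ p ^ k) x
      hιne hfrob hself hcross
    have hexists : ∃ lam : F, lam • x = fun i => x i ^ p ^ k := by
      by_contra hc
      push_neg at hc
      apply hnind
      rw [linearIndependent_fin2]
      constructor
      · simp only [Matrix.cons_val_one, Matrix.head_cons]
        intro h
        exact hxj (congrFun h j)
      · intro a
        simp only [Matrix.cons_val_one, Matrix.head_cons, Matrix.cons_val_zero]
        exact hc a
    obtain ⟨lam, hlam⟩ := hexists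
    have hl : ∀ i, lam * x i = x i ^ p ^ k := by
      intro i
      have := congrFun hlam i
      simpa using this
    have hpk0 : p ^ k ≠ 0 := by positivity
    have hlam0 : lam ≠ 0 := by
      intro h0
      have h1 := hl j
      rw [h0, zero_mul] at h1
      exact hxj ((pow_eq_zero_iff hpk0).mp h1.symm)
    have hz : ∀ i, ∃ z : ZMod p, ι z = x i * (x j)⁻¹ := by
      intro i
      apply mem_prime_field hF hm hgcd
      rw [mul_pow, inv_pow, ← hl i, ← hl j]
      field_simp
    choose z hzdef using hz
    refine ⟨z, ?_, ?_, ?_⟩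
    · apply hinj
      rw [hzdef j, map_one, mul_inv_cancel₀ hxj]
    · apply hinj
      rw [map_sum, map_zero]
      calc ∑ i, ι (y i * z i ^ 2)
          = ((x j)⁻¹) ^ 2 * ∑ i, ι (y i) * x i ^ 2 := by
            rw [Finset.mul_sum]
            apply Finset.sum_congr rfl
            intro i _
            rw [map_mul, map_pow, hzdef i]
            ring
        _ = 0 := by rw [hx1, mul_zero]
    · intro i
      rw [hzdef i]
      field_simp
  -- the parametrizing set
  set T : Finset (F × (Fin 3 → ZMod p)) := univ.filter
      (fun cz => cz.1 ≠ 0 ∧ (cz.2 ≠ 0 ∧ ∑ i, y i * cz.2 i ^ 2 = 0)) with hT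
  set f : F × (Fin 3 → ZMod p) → (Fin 3 → F) := fun cz i => cz.1 * ι (cz.2 i) with hfdef
  have hpow : ∀ w : ZMod p, (ι w) ^ (p ^ k + 1) = ι (w ^ 2) := by
    intro w
    rw [pow_succ, hιfix, ← map_mul, ← pow_two]
  have hzero_mem : (0 : Fin 3 → F) ∈ Sol := by
    rw [hSol, Finset.mem_filter]
    refine ⟨Finset.mem_univ _, ?_, ?_⟩
    · apply Finset.sum_eq_zero
      intro i _
      rw [Pi.zero_apply, zero_pow (two_ne_zero), mul_zero]
    · apply Finset.sum_eq_zero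
      intro i _
      rw [Pi.zero_apply, zero_pow (by positivity), mul_zero]
  have h_maps : ∀ t ∈ T, f t ∈ Sol.erase 0 := by
    intro t ht
    rw [hT, Finset.mem_filter] at ht
    obtain ⟨-, hc0, hz0, hconic⟩ := ht
    obtain ⟨j, hj⟩ := Function.ne_iff.mp hz0
    simp only [Pi.zero_apply] at hj
    rw [Finset.mem_erase]
    constructor
    · intro h
      have h2 := congrFun h j
      simp only [hfdef, Pi.zero_apply] at h2
      exact (mul_ne_zero hc0 ((map_ne_zero ι).mpr hj)) h2
    · rw [hSol, Finset.mem_filter]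
      refine ⟨Finset.mem_univ _, ?_, ?_⟩
      · have hterm : ∀ i, ι (y i) * (f t i) ^ 2 = t.1 ^ 2 * ι (y i * t.2 i ^ 2) := by
          intro i
          simp only [hfdef]
          rw [map_mul, mul_pow, map_pow]
          ring
        rw [Finset.sum_congr rfl (fun i _ => hterm i), ← Finset.mul_sum, ← map_sum, hconic,
          map_zero, mul_zero]
      · have hterm : ∀ i, ι (y i) * (f t i) ^ (p ^ k + 1)
            = t.1 ^ (p ^ k + 1) * ι (y i * t.2 i ^ 2) := by
          intro i
          simp only [hfdef]
          rw [mul_pow, hpow (t.2 i), map_mul]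
          ring
        rw [Finset.sum_congr rfl (fun i _ => hterm i), ← Finset.mul_sum, ← map_sum, hconic,
          map_zero, mul_zero]
  have h_cardT : T.card = (p ^ m - 1) * (p ^ 2 - 1) := by
    rw [hT, ← Finset.univ_product_univ,
      Finset.filter_product (fun c : F => c ≠ 0)
        (fun z : Fin 3 → ZMod p => z ≠ 0 ∧ ∑ i, y i * z i ^ 2 = 0),
      Finset.card_product]
    congr 1
    · rw [Finset.filter_ne' univ (0 : F), Finset.card_erase_of_mem (Finset.mem_univ _),
        Finset.card_univ, hF]
    · have hset : univ.filter (fun z : Fin 3 → ZMod p => z ≠ 0 ∧ ∑ i, y i * z i ^ 2 = 0)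
          = (univ.filter (fun z : Fin 3 → ZMod p => ∑ i, y i * z i ^ 2 = 0)).erase 0 := by
        ext z
        simp only [Finset.mem_filter, Finset.mem_erase, Finset.mem_univ, true_and]
      rw [hset, Finset.card_erase_of_mem, conic_count_fin hp2 y hy]
      rw [Finset.mem_filter]
      refine ⟨Finset.mem_univ _, ?_⟩
      apply Finset.sum_eq_zero
      intro i _
      rw [Pi.zero_apply, zero_pow two_ne_zero, mul_zero]
  have h_fiber : ∀ x ∈ Sol.erase 0, (T.filter (fun t => f t = x)).card = p - 1 := by
    intro x hx
    obtain ⟨hx0, hxSol⟩ := Finset.mem_erase.mp hx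
    rw [hSol, Finset.mem_filter] at hxSol
    obtain ⟨-, hx1, hx2⟩ := hxSol
    obtain ⟨j, hxj⟩ := Function.ne_iff.mp hx0
    simp only [Pi.zero_apply] at hxj
    obtain ⟨z₀, hz₀j, hz₀conic, hz₀rep⟩ := main_repr x hx1 hx2 j hxj
    have hbij : (T.filter (fun t => f t = x)).card
        = (univ.filter (fun α : ZMod p => α ≠ 0)).card := by
      apply Finset.card_nbij' (fun t : F × (Fin 3 → ZMod p) => t.2 j)
        (fun α : ZMod p => ((x j * (ι α)⁻¹, fun i => α * z₀ i) : F × (Fin 3 → ZMod p)))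
      · intro t ht
        rw [Finset.mem_coe, Finset.mem_filter] at ht ⊢
        obtain ⟨htT, htf⟩ := ht
        refine ⟨Finset.mem_univ _, ?_⟩
        intro hzj
        have h2 := congrFun htf j
        simp only [hfdef] at h2
        rw [show t.2 j = 0 from hzj, map_zero, mul_zero] at h2
        exact hxj h2.symm
      · intro α hα
        have hα0 : α ≠ 0 := (Finset.mem_filter.mp hα).2
        rw [Finset.mem_coe, Finset.mem_filter]
        have hια : ι α ≠ 0 := (map_ne_zero ι).mpr hα0
        refine ⟨?_, ?_⟩
        · rw [hT, Finset.mem_filter]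
          refine ⟨Finset.mem_univ _, ?_, ?_, ?_⟩
          · exact mul_ne_zero hxj (inv_ne_zero hια)
          · intro h0
            have := congrFun h0 j
            simp only [Pi.zero_apply, hz₀j, mul_one] at this
            exact hα0 this
          · have hterm : ∀ i, y i * (α * z₀ i) ^ 2 = α ^ 2 * (y i * z₀ i ^ 2) := by
              intro i; ring
            rw [Finset.sum_congr rfl (fun i _ => hterm i), ← Finset.mul_sum, hz₀conic, mul_zero]
        · funext i
          show x j * (ι α)⁻¹ * ι (α * z₀ i) = x i
          rw [map_mul, hz₀rep i]
          field_simp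
      · intro t ht
        show ((x j * (ι (t.2 j))⁻¹, fun i => t.2 j * z₀ i) : F × (Fin 3 → ZMod p)) = t
        rw [Finset.mem_coe, Finset.mem_filter] at ht
        obtain ⟨htT, htf⟩ := ht
        rw [hT, Finset.mem_filter] at htT
        obtain ⟨-, hc0, hz0, -⟩ := htT
        have hfi : ∀ i, t.1 * ι (t.2 i) = x i := by
          intro i
          have := congrFun htf i
          simpa only [hfdef] using this
        have hzjne : ι (t.2 j) ≠ 0 := by
          intro h0
          have h1 := hfi j
          rw [h0, mul_zero] at h1
          exact hxj h1.symm
        have hcval : x j * (ι (t.2 j))⁻¹ = t.1 := by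
          rw [← hfi j]
          field_simp
        have hzval : ∀ i, t.2 j * z₀ i = t.2 i := by
          intro i
          apply hinj
          rw [map_mul]
          apply mul_left_cancel₀ hc0
          rw [← mul_assoc, hfi j, ← hz₀rep i, hfi i]
        have : (fun i => t.2 j * z₀ i) = t.2 := funext hzval
        rw [this, hcval]
      · intro α hα
        show α * z₀ j = α
        rw [hz₀j, mul_one]
    rw [hbij, Finset.filter_ne' univ (0 : ZMod p),
      Finset.card_erase_of_mem (Finset.mem_univ _), Finset.card_univ, ZMod.card]
  -- assemble the count
  have hsum := Finset.card_eq_sum_card_fiberwise h_maps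
  rw [Finset.sum_congr rfl h_fiber, Finset.sum_const, smul_eq_mul, h_cardT] at hsum
  have hp1 : 0 < p - 1 := by omega
  have hfactor : (p ^ m - 1) * (p ^ 2 - 1) = ((p ^ m - 1) * (p + 1)) * (p - 1) := by
    rw [show p ^ 2 - 1 = p ^ 2 - 1 ^ 2 by norm_num, Nat.sq_sub_sq]
    ring
  rw [hfactor] at hsum
  have hcard_erase : (Sol.erase 0).card = (p ^ m - 1) * (p + 1) :=
    Nat.eq_of_mul_eq_mul_right hp1 hsum.symm
  have hSolcard : Sol.card = (Sol.erase 0).card + 1 := by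
    rw [Finset.card_erase_of_mem hzero_mem]
    have h1 : 1 ≤ Sol.card := Finset.card_pos.mpr ⟨0, hzero_mem⟩
    omega
  rw [hSolcard, hcard_erase]
  omega

end Counting

section Assembly

open Finset

private lemma card_filter_prod {A B : Type} [Fintype A] [Fintype B] [DecidableEq B]
    (P : A × B → Prop) [DecidablePred P] :
    ((univ : Finset (A × B)).filter P).card
      = ∑ y : B, ((univ : Finset A).filter (fun x => P (x, y))).card := by
  classical
  rw [Finset.card_eq_sum_card_fiberwise
    (f := fun s : A × B => s.2) (t := univ) (fun x _ => Finset.mem_univ _)]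
  apply Finset.sum_congr rfl
  intro y _
  apply Finset.card_nbij' (fun s : A × B => s.1) (fun x : A => ((x, y) : A × B))
  · intro s hs
    simp only [Finset.mem_coe, Finset.mem_filter, Finset.mem_univ, true_and] at hs ⊢
    obtain ⟨h1, h2⟩ := hs
    rw [← h2]
    exact h1
  · intro x hx
    simp only [Finset.mem_coe, Finset.mem_filter, Finset.mem_univ, true_and] at hx ⊢
    exact ⟨hx, trivial⟩
  · intro s hs
    simp only [Finset.mem_coe, Finset.mem_filter] at hs
    rw [← hs.2]
  · intro x _
    rfl

private lemma arith_final (p m : ℕ) (hp : 2 ≤ p) :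
    1 + (p ^ m - 1) * (p + 1) = p ^ (m + 1) + p ^ m - p := by
  obtain ⟨Q, hQ⟩ : ∃ Q, p ^ m = Q + 1 := by
    refine ⟨p ^ m - 1, ?_⟩
    have h1 : 1 ≤ p ^ m := Nat.one_le_pow m p (by omega)
    omega
  rw [pow_succ, hQ]
  have h3 : Q + 1 - 1 = Q := by omega
  rw [h3]
  have h2 : (Q + 1) * p + (Q + 1) = Q * p + Q + 1 + p := by ring
  rw [h2, Nat.add_sub_cancel]
  ring

/-- Lemma 3.3: the number of solutions `(x₁,x₂,x₃,y₁,y₂,y₃) ∈ F³ × (𝔽_p*)³` of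
`y₁x₁² + y₂x₂² + y₃x₃² = 0` and `y₁x₁^{d₁} + y₂x₂^{d₁} + y₃x₃^{d₁} = 0`,
with `d₁ = p^k + 1`, is `(p-1)³·(p^{m+1} + p^m - p)`. -/
theorem stmt_5 (p m k : ℕ) [Fact p.Prime] (hp : Odd p) (hm5 : 5 ≤ m) (hm : Odd m)
    (hk : 0 < k) (hgcd : Nat.gcd m k = 1)
    (F : Type) [Field F] [Fintype F] [Algebra (ZMod p) F]
    (hF : Fintype.card F = p ^ m) :
    Nat.card {s : (Fin 3 → F) × (Fin 3 → ZMod p) //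
      (∀ i, s.2 i ≠ 0) ∧
      ∑ i, algebraMap (ZMod p) F (s.2 i) * s.1 i ^ 2 = 0 ∧
      ∑ i, algebraMap (ZMod p) F (s.2 i) * s.1 i ^ (p ^ k + 1) = 0} =
    (p - 1) ^ 3 * (p ^ (m + 1) + p ^ m - p) := by
  classical
  have hp2 : p ≠ 2 := by
    intro h
    rw [h] at hp
    exact (Nat.not_odd_iff_even.mpr (by norm_num)) hp
  have hm1 : 1 < m := by omega
  have hppos : 2 ≤ p := (Fact.out : p.Prime).two_le
  rw [Nat.card_eq_fintype_card, Fintype.card_subtype]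
  rw [card_filter_prod (fun s : (Fin 3 → F) × (Fin 3 → ZMod p) =>
      (∀ i, s.2 i ≠ 0) ∧
      ∑ i, algebraMap (ZMod p) F (s.2 i) * s.1 i ^ 2 = 0 ∧
      ∑ i, algebraMap (ZMod p) F (s.2 i) * s.1 i ^ (p ^ k + 1) = 0)]
  have hinner : ∀ y : Fin 3 → ZMod p,
      ((univ : Finset (Fin 3 → F)).filter (fun x =>
        (∀ i, y i ≠ 0) ∧
        ∑ i, algebraMap (ZMod p) F (y i) * x i ^ 2 = 0 ∧
        ∑ i, algebraMap (ZMod p) F (y i) * x i ^ (p ^ k + 1) = 0)).card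
      = if (∀ i, y i ≠ 0) then 1 + (p ^ m - 1) * (p + 1) else 0 := by
    intro y
    by_cases hy : ∀ i, y i ≠ 0
    · rw [if_pos hy]
      apply sol_count hp2 hm1 hgcd hF y hy
      intro x
      simp only [Finset.mem_filter, Finset.mem_univ, true_and]
      tauto
    · rw [if_neg hy]
      rw [Finset.card_eq_zero]
      apply Finset.filter_false_of_mem
      intro x _
      intro hcond
      exact hy hcond.1
  rw [Finset.sum_congr rfl (fun y _ => hinner y)]
  rw [← Finset.sum_filter]
  rw [Finset.sum_const, smul_eq_mul]
  have hyset : (univ : Finset (Fin 3 → ZMod p)).filter (fun y => ∀ i, y i ≠ 0)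
      = Fintype.piFinset (fun _ : Fin 3 => (univ : Finset (ZMod p)).filter (fun a => a ≠ 0)) := by
    ext y
    simp only [Finset.mem_filter, Finset.mem_univ, true_and, Fintype.mem_piFinset]
  have hycard : ((univ : Finset (Fin 3 → ZMod p)).filter (fun y => ∀ i, y i ≠ 0)).card
      = (p - 1) ^ 3 := by
    rw [hyset, Fintype.card_piFinset]
    have h1 : ((univ : Finset (ZMod p)).filter (fun a => a ≠ 0)).card = p - 1 := by
      rw [Finset.filter_ne' univ (0 : ZMod p),
        Finset.card_erase_of_mem (Finset.mem_univ _), Finset.card_univ, ZMod.card]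
    rw [Finset.prod_congr rfl (fun i _ => h1), Finset.prod_const, Finset.card_univ,
      Fintype.card_fin]
  rw [hycard, arith_final p m hppos]

end Assembly
end
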